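/- arXiv:2603.15817 — 2 statements merged into one kernel-verified Lean document; each statement's English description precedes it below -/
import Mathlib

section
/- Let P₀ be a distribution for Z = (Y, X, A) with density p₀ with respect to a σ-finite measure ν, satisfying |Y| ≤ C_Y almost surely, π(x) := P₀(A=1|X=x) ∈ [ε, 1−ε] almost surely, and Var₀(τ(X)) > 0 where τ(x) := μ₁(x) − μ₀(x) and μ_a(x) := E₀[Y|X=x,A=a]; set β₀ := E₀[τ(X)]. Define g_β(x) := (τ(x) − β₀)/Var₀(τ(X)) and for |t| < 1/‖g_β‖_∞ let P_t have density p_t(z) := p₀(z)(1 + t g_β(x)). Then: (1) {P_t} is a regular (QMD) submodel through P₀ with score g_β; (2) the conditional outcome means and propensity are unchanged, i.e. E_{P_t}[Y|X=x,A=a] = μ_a(x) and P_t(A=1|X=x) = π(x) for all small t; and (3) β(P_t) := E_{P_t}[μ₁^{P_t}(X) − μ₀^{P_t}(X)] = β₀ + t for all small t. -/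
/-! STATEMENT 15: the β-coordinate submodel for the ATE: the linear tilt with score
g_β(x) = (τ(x) − β₀)/Var₀(τ(X)) is a regular (QMD) submodel through P₀ which leaves the
conditional outcome means and the propensity unchanged and moves β at exactly unit
rate: β(P_t) = β₀ + t. -/

open MeasureTheory Filter Topology Set ENNReal

namespace ATE

variable {X : Type*} [MeasurableSpace X]

/-- An observation `z = (y, x, a)`: real outcome, covariates, binary treatment. -/
abbrev Obs (X : Type*) := ℝ × X × Bool

/-- `μa` is (a version of) the conditional outcome mean `E_P[Y | X = x, A = a]`:
it is measurable, integrable, and satisfies the defining conditional-expectation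
identity against all measurable sets of covariate values. -/
def IsCondMean (P : Measure (Obs X)) (a : Bool) (μa : X → ℝ) : Prop :=
  Measurable μa ∧ Integrable (fun z : Obs X => μa z.2.1) P ∧
  ∀ B : Set X, MeasurableSet B →
    ∫ z in {z : Obs X | z.2.1 ∈ B ∧ z.2.2 = a}, z.1 ∂P
      = ∫ z in {z : Obs X | z.2.1 ∈ B ∧ z.2.2 = a}, μa z.2.1 ∂P

/-- `pi` is (a version of) the propensity score `P(A = 1 | X = x)`. -/
def IsPropensity (P : Measure (Obs X)) (pi : X → ℝ) : Prop :=
  Measurable pi ∧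
  ∀ B : Set X, MeasurableSet B →
    (P {z : Obs X | z.2.1 ∈ B ∧ z.2.2 = true}).toReal
      = ∫ z in {z : Obs X | z.2.1 ∈ B}, pi z.2.1 ∂P

/-- The AIPW estimating function
`m(z; b, (μ1, μ0, π)) = (a/π(x))(y − μ1(x)) − ((1−a)/(1−π(x)))(y − μ0(x)) + μ1(x) − μ0(x) − b`. -/
noncomputable def aipw (μ1 μ0 pi : X → ℝ) (b : ℝ) (z : Obs X) : ℝ :=
  (if z.2.2 then (1:ℝ) else 0) / pi z.2.1 * (z.1 - μ1 z.2.1)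
    - (1 - if z.2.2 then (1:ℝ) else 0) / (1 - pi z.2.1) * (z.1 - μ0 z.2.1)
    + μ1 z.2.1 - μ0 z.2.1 - b

/-- `p` is a density of `P` with respect to `ν`. -/
def IsDensityOf {Z : Type*} [MeasurableSpace Z] (ν P : Measure Z) (p : Z → ℝ) : Prop :=
  P = ν.withDensity (fun z => ENNReal.ofReal (p z))

lemma measurable_proj : Measurable (fun z : Obs X => z.2.1) :=
  measurable_fst.comp measurable_snd

lemma measurableSet_BA {B : Set X} (hB : MeasurableSet B) (a : Bool) :
    MeasurableSet {z : Obs X | z.2.1 ∈ B ∧ z.2.2 = a} :=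
  (measurable_proj hB).inter ((measurable_snd.comp measurable_snd) (measurableSet_singleton a))

/-- The sigma-algebra on observations generated by the covariate. -/
def mX (X : Type*) [MeasurableSpace X] : MeasurableSpace (Obs X) :=
  MeasurableSpace.comap (fun z : Obs X => z.2.1) inferInstance

lemma orth (P0 : Measure (Obs X)) [IsFiniteMeasure P0]
    (D : Obs X → ℝ) (hD : Integrable D P0)
    (hA : ∀ B : Set X, MeasurableSet B → ∫ z in {z : Obs X | z.2.1 ∈ B}, D z ∂P0 = 0)
    (H : X → ℝ) (hH : Measurable H) (C : ℝ) (hHb : ∀ᵐ z ∂P0, ‖H z.2.1‖ ≤ C) :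
    ∫ z, H z.2.1 * D z ∂P0 = 0 := by
  have hprojm : Measurable (fun z : Obs X => z.2.1) := measurable_proj
  have hm : mX X ≤ _ := hprojm.comap_le
  haveI : IsFiniteMeasure (P0.trim hm) :=
    ⟨by rw [trim_measurableSet_eq hm (@MeasurableSet.univ _ (mX X))]; exact measure_lt_top _ _⟩
  have hcond : (fun _ : Obs X => (0:ℝ)) =ᵐ[P0] P0[D|mX X] := by
    refine ae_eq_condExp_of_forall_setIntegral_eq hm hD
      (fun s _ _ => integrableOn_zero) ?_ ?_
    · rintro s ⟨B, hB, rfl⟩ -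
      simp only [integral_zero]
      exact (hA B hB).symm
    · exact aestronglyMeasurable_const
  have hmeasm : Measurable[mX X] (fun z : Obs X => z.2.1) := fun s hs => ⟨s, hs, rfl⟩
  have hHm : StronglyMeasurable[mX X] (fun z : Obs X => H z.2.1) :=
    (hH.comp hmeasm).stronglyMeasurable
  have hHD : Integrable (fun z : Obs X => H z.2.1 * D z) P0 :=
    hD.bdd_mul (hH.comp hprojm).aestronglyMeasurable hHb
  have hmul := condExp_mul_of_stronglyMeasurable_left (μ := P0) hHm hHD hD
  calc ∫ z, H z.2.1 * D z ∂P0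
      = ∫ z, (P0[(fun z : Obs X => H z.2.1) * D|mX X]) z ∂P0 := (integral_condExp hm).symm
    _ = ∫ z, ((fun z : Obs X => H z.2.1) * P0[D|mX X]) z ∂P0 := integral_congr_ae hmul
    _ = 0 := by
        have h0 : ((fun z : Obs X => H z.2.1) * P0[D|mX X]) =ᵐ[P0] fun _ => (0:ℝ) := by
          filter_upwards [hcond] with z hz
          simp [Pi.mul_apply, ← hz]
        rw [integral_congr_ae h0, integral_zero]

lemma propensity_lower (P0 : Measure (Obs X)) [IsProbabilityMeasure P0]
    (eps : ℝ) (pi : X → ℝ) (hpim : Measurable pi)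
    (hpi2 : ∀ B : Set X, MeasurableSet B →
      (P0 {z : Obs X | z.2.1 ∈ B ∧ z.2.2 = true}).toReal
        = ∫ z in {z : Obs X | z.2.1 ∈ B}, pi z.2.1 ∂P0)
    (hpir : ∀ᵐ z ∂P0, eps ≤ pi z.2.1 ∧ pi z.2.1 ≤ 1 - eps)
    (B : Set X) (hB : MeasurableSet B) (a : Bool) :
    eps * (P0 {z : Obs X | z.2.1 ∈ B}).toReal
      ≤ (P0 {z : Obs X | z.2.1 ∈ B ∧ z.2.2 = a}).toReal := by
  have hUB : MeasurableSet {z : Obs X | z.2.1 ∈ B} := measurable_proj hB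
  have hpii : Integrable (fun z : Obs X => pi z.2.1) P0 := by
    refine memLp_one_iff_integrable.1 (MemLp.of_bound
      (hpim.comp measurable_proj).aestronglyMeasurable (|eps| + |1 - eps|) ?_)
    filter_upwards [hpir] with z hz
    rw [Real.norm_eq_abs, abs_le]
    constructor
    · nlinarith [neg_abs_le eps, abs_nonneg (1 - eps)]
    · nlinarith [le_abs_self (1 - eps), abs_nonneg eps]
  have hconst : ∀ c : ℝ, ∫ _ in {z : Obs X | z.2.1 ∈ B}, c ∂P0
      = c * (P0 {z : Obs X | z.2.1 ∈ B}).toReal := by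
    intro c; rw [setIntegral_const, smul_eq_mul, mul_comm, measureReal_def]
  have hTtrue : (P0 {z : Obs X | z.2.1 ∈ B ∧ z.2.2 = true}).toReal
      = ∫ z in {z : Obs X | z.2.1 ∈ B}, pi z.2.1 ∂P0 := hpi2 B hB
  cases a
  · -- a = false
    have hsplit : {z : Obs X | z.2.1 ∈ B}
        = {z : Obs X | z.2.1 ∈ B ∧ z.2.2 = true} ∪ {z : Obs X | z.2.1 ∈ B ∧ z.2.2 = false} := by
      ext z; cases hz : z.2.2 <;> simp [hz]
    have hdisj : Disjoint {z : Obs X | z.2.1 ∈ B ∧ z.2.2 = true}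
        {z : Obs X | z.2.1 ∈ B ∧ z.2.2 = false} := by
      rw [Set.disjoint_left]
      rintro z ⟨-, h1⟩ ⟨-, h2⟩
      rw [h1] at h2; exact Bool.noConfusion h2
    have hadd : (P0 {z : Obs X | z.2.1 ∈ B}).toReal
        = (P0 {z : Obs X | z.2.1 ∈ B ∧ z.2.2 = true}).toReal
          + (P0 {z : Obs X | z.2.1 ∈ B ∧ z.2.2 = false}).toReal := by
      rw [hsplit, measure_union hdisj (measurableSet_BA hB false),
        ENNReal.toReal_add (measure_ne_top _ _) (measure_ne_top _ _)]
    have hle : ∫ z in {z : Obs X | z.2.1 ∈ B}, pi z.2.1 ∂P0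
        ≤ ∫ _ in {z : Obs X | z.2.1 ∈ B}, (1 - eps) ∂P0 := by
      refine integral_mono_ae hpii.integrableOn
        (integrableOn_const (measure_ne_top _ _)) ?_
      exact ae_restrict_of_ae (hpir.mono fun z hz => hz.2)
    rw [hconst] at hle
    rw [hTtrue] at hadd
    linarith
  · -- a = true
    have hge : ∫ _ in {z : Obs X | z.2.1 ∈ B}, eps ∂P0
        ≤ ∫ z in {z : Obs X | z.2.1 ∈ B}, pi z.2.1 ∂P0 := by
      refine integral_mono_ae (integrableOn_const (measure_ne_top _ _))
        hpii.integrableOn ?_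
      exact ae_restrict_of_ae (hpir.mono fun z hz => hz.1)
    rw [hconst] at hge
    rw [hTtrue]
    exact hge

lemma bound_aux (P0 : Measure (Obs X)) [IsProbabilityMeasure P0]
    (g : Obs X → ℝ) (hgint : Integrable g P0) (CY : ℝ) (hg : ∀ᵐ z ∂P0, g z ≤ CY)
    (f : X → ℝ) (hf : Measurable f) (hfi : Integrable (fun z : Obs X => f z.2.1) P0)
    (a : Bool)
    (hid : ∀ B : Set X, MeasurableSet B →
      ∫ z in {z : Obs X | z.2.1 ∈ B ∧ z.2.2 = a}, g z ∂P0
        = ∫ z in {z : Obs X | z.2.1 ∈ B ∧ z.2.2 = a}, f z.2.1 ∂P0)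
    (eps : ℝ) (heps : 0 < eps) (pi : X → ℝ) (hpim : Measurable pi)
    (hpi2 : ∀ B : Set X, MeasurableSet B →
      (P0 {z : Obs X | z.2.1 ∈ B ∧ z.2.2 = true}).toReal
        = ∫ z in {z : Obs X | z.2.1 ∈ B}, pi z.2.1 ∂P0)
    (hpir : ∀ᵐ z ∂P0, eps ≤ pi z.2.1 ∧ pi z.2.1 ≤ 1 - eps) :
    ∀ᵐ z ∂P0, f z.2.1 ≤ CY := by
  have key : ∀ n : ℕ, P0 {z : Obs X | CY + 1/((n:ℝ)+1) ≤ f z.2.1} = 0 := by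
    intro n
    set c : ℝ := 1/((n:ℝ)+1) with hc
    have hcpos : 0 < c := by positivity
    by_contra hne
    set B : Set X := {x | CY + c ≤ f x} with hBdef
    have hB : MeasurableSet B := measurableSet_le measurable_const hf
    have hUBeq : {z : Obs X | CY + c ≤ f z.2.1} = {z : Obs X | z.2.1 ∈ B} := rfl
    rw [hUBeq] at hne
    have hUBpos : 0 < (P0 {z : Obs X | z.2.1 ∈ B}).toReal :=
      ENNReal.toReal_pos hne (measure_ne_top _ _)
    have hTpos : 0 < (P0 {z : Obs X | z.2.1 ∈ B ∧ z.2.2 = a}).toReal :=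
      lt_of_lt_of_le (mul_pos heps hUBpos)
        (propensity_lower P0 eps pi hpim hpi2 hpir B hB a)
    have h1 : ∫ z in {z : Obs X | z.2.1 ∈ B ∧ z.2.2 = a}, g z ∂P0
        ≤ CY * (P0 {z : Obs X | z.2.1 ∈ B ∧ z.2.2 = a}).toReal := by
      have := integral_mono_ae (μ := P0.restrict {z : Obs X | z.2.1 ∈ B ∧ z.2.2 = a})
        hgint.integrableOn (integrableOn_const (measure_ne_top _ _))
        (ae_restrict_of_ae hg)
      simpa [setIntegral_const, smul_eq_mul, mul_comm, measureReal_def] using this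
    have h2 : (CY + c) * (P0 {z : Obs X | z.2.1 ∈ B ∧ z.2.2 = a}).toReal
        ≤ ∫ z in {z : Obs X | z.2.1 ∈ B ∧ z.2.2 = a}, f z.2.1 ∂P0 :=
      setIntegral_ge_of_const_le_real (measurableSet_BA hB a) (measure_ne_top _ _)
        (fun z hz => hz.1) hfi.integrableOn
    rw [← hid B hB] at h2
    nlinarith
  have hnull : P0 {z : Obs X | ¬ f z.2.1 ≤ CY} = 0 := by
    have hsub : {z : Obs X | ¬ f z.2.1 ≤ CY}
        ⊆ ⋃ n : ℕ, {z : Obs X | CY + 1/((n:ℝ)+1) ≤ f z.2.1} := by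
      intro z hz
      simp only [mem_setOf_eq, not_le] at hz
      obtain ⟨n, hn⟩ := exists_nat_one_div_lt (sub_pos.2 hz)
      exact mem_iUnion.2 ⟨n, by simp only [mem_setOf_eq]; linarith⟩
    exact measure_mono_null hsub (measure_iUnion_null key)
  exact hnull


lemma sqrt_slope_bound {g t M : ℝ} (ht : t ≠ 0) (hg : |g| ≤ M) (htg : |t * g| ≤ 1/2) :
    |(Real.sqrt (1 + t * g) - 1) / t - g / 2| ≤ M + M / 2 := by
  have habs := abs_le.mp htg
  have hw0 : 0 ≤ 1 + t * g := by linarith [habs.1]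
  have hs0 := Real.sqrt_nonneg (1 + t * g)
  have hs1 : Real.sqrt (1 + t * g) + 1 ≠ 0 := by positivity
  have hslope : (Real.sqrt (1 + t * g) - 1) / t = g / (Real.sqrt (1 + t * g) + 1) := by
    rw [div_eq_div_iff ht hs1]
    linear_combination Real.mul_self_sqrt hw0
  have hsbd : |(Real.sqrt (1 + t * g) - 1) / t| ≤ M := by
    rw [hslope, abs_div]
    have h1le : 1 ≤ |Real.sqrt (1 + t * g) + 1| := by
      rw [abs_of_pos (by positivity)]; linarith
    calc |g| / |Real.sqrt (1 + t * g) + 1| ≤ |g| := div_le_self (abs_nonneg g) h1le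
      _ ≤ M := hg
  have h4 := abs_add_le ((Real.sqrt (1 + t * g) - 1) / t) (-(g / 2))
  rw [← sub_eq_add_neg, abs_neg] at h4
  have h5 : |g / 2| ≤ M / 2 := by rw [abs_div, abs_two]; linarith
  linarith

lemma sqrt_slope_tendsto (g : ℝ) :
    Tendsto (fun t : ℝ => (Real.sqrt (1 + t * g) - 1) / t) (𝓝[≠] (0:ℝ)) (𝓝 (g / 2)) := by
  have h1 : HasDerivAt (fun t : ℝ => 1 + t * g) g 0 := by
    simpa using ((hasDerivAt_id (0:ℝ)).mul_const g).const_add 1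
  have h2 : (1:ℝ) + 0 * g ≠ 0 := by norm_num
  have h3 := (Real.hasDerivAt_sqrt h2).comp 0 h1
  have hd : HasDerivAt (fun t : ℝ => Real.sqrt (1 + t * g)) (g / 2) 0 := by
    have hval : 1 / (2 * Real.sqrt (1 + 0 * g)) * g = g / 2 := by
      norm_num [Real.sqrt_one]; ring
    rw [← hval]
    exact h3
  have hslope := hasDerivAt_iff_tendsto_slope.mp hd
  refine Tendsto.congr' ?_ hslope
  filter_upwards [eventually_mem_nhdsWithin] with t ht
  rw [slope_def_field]
  norm_num [Real.sqrt_one]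

set_option maxHeartbeats 2000000 in
theorem ate_beta_coordinate_submodel
    (ν : Measure (Obs X)) [SigmaFinite ν]
    (P0 : Measure (Obs X)) [IsProbabilityMeasure P0]
    (p0 : Obs X → ℝ) (hp0_meas : Measurable p0) (hp0_nonneg : ∀ᵐ z ∂ν, 0 ≤ p0 z)
    (hp0 : IsDensityOf ν P0 p0)
    (CY eps : ℝ) (heps : 0 < eps)
    (hY : ∀ᵐ z ∂P0, |z.1| ≤ CY)
    (μ : Bool → X → ℝ) (hμ : ∀ a, IsCondMean P0 a (μ a))
    (pi : X → ℝ) (hpi : IsPropensity P0 pi)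
    (hpi_range : ∀ᵐ z ∂P0, pi z.2.1 ∈ Set.Icc eps (1 - eps))
    -- τ, β₀, Var₀(τ(X)) > 0 and the score g_β
    (τ : X → ℝ) (hτ : τ = fun x => μ true x - μ false x)
    (β0 : ℝ) (hβ0 : β0 = ∫ z, τ z.2.1 ∂P0)
    (V : ℝ) (hV : V = ∫ z, (τ z.2.1 - β0) ^ 2 ∂P0) (hVpos : 0 < V)
    (gβ : X → ℝ) (hgβ : gβ = fun x => (τ x - β0) / V)
    -- the linear tilt family
    (Pt : ℝ → Measure (Obs X))
    (hPt : Pt = fun t => ν.withDensity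
      (fun z => ENNReal.ofReal (p0 z * (1 + t * gβ z.2.1)))) :
    ∃ δ > 0,
      -- (1) {P_t} is a regular (QMD) submodel through P₀ with score g_β(X)
      Pt 0 = P0 ∧
      (∀ t : ℝ, |t| < δ → IsProbabilityMeasure (Pt t)) ∧
      MemLp (fun z : Obs X => gβ z.2.1) 2 P0 ∧
      (∫ z, gβ z.2.1 ∂P0 = 0) ∧
      Tendsto (fun t : ℝ => ∫ z,
          ((Real.sqrt (p0 z * (1 + t * gβ z.2.1)) - Real.sqrt (p0 z)) / t
            - (1/2) * gβ z.2.1 * Real.sqrt (p0 z)) ^ 2 ∂ν) (𝓝[≠] (0:ℝ)) (𝓝 0) ∧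
      -- (2) the conditional outcome means and the propensity are unchanged
      (∀ t : ℝ, |t| < δ → (∀ a, IsCondMean (Pt t) a (μ a)) ∧ IsPropensity (Pt t) pi) ∧
      -- (3) β moves at exactly unit rate
      (∀ t : ℝ, |t| < δ →
        ∫ z, (μ true z.2.1 - μ false z.2.1) ∂(Pt t) = β0 + t) := by
  classical
  have hp0' : P0 = ν.withDensity (fun z => ENNReal.ofReal (p0 z)) := hp0
  have hprojm : Measurable (fun z : Obs X => z.2.1) := measurable_proj
  have hμm : ∀ a, Measurable (μ a) := fun a => (hμ a).1
  have hμint : ∀ a, Integrable (fun z : Obs X => μ a z.2.1) P0 := fun a => (hμ a).2.1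
  have hτm : Measurable τ := by rw [hτ]; exact (hμm true).sub (hμm false)
  have hτint : Integrable (fun z : Obs X => τ z.2.1) P0 := by
    have := (hμint true).sub (hμint false)
    refine this.congr (ae_of_all _ fun z => ?_)
    simp [hτ]
  have hgm : Measurable gβ := by rw [hgβ]; exact (hτm.sub measurable_const).div_const V
  have hgm2 : Measurable (fun z : Obs X => gβ z.2.1) := hgm.comp hprojm
  have hgβ_int : Integrable (fun z : Obs X => gβ z.2.1) P0 := by
    have := (hτint.sub (integrable_const β0)).div_const V
    refine this.congr (ae_of_all _ fun z => ?_)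
    simp [hgβ]
  haveI : (ae P0).NeBot := ae_neBot.mpr (IsProbabilityMeasure.ne_zero P0)
  have hCY0 : 0 ≤ CY := by
    obtain ⟨z, hz⟩ := hY.exists
    exact le_trans (abs_nonneg _) hz
  have hyint : Integrable (fun z : Obs X => z.1) P0 :=
    memLp_one_iff_integrable.1 (MemLp.of_bound measurable_fst.aestronglyMeasurable CY
      (by filter_upwards [hY] with z hz; simpa [Real.norm_eq_abs] using hz))
  have hpir' : ∀ᵐ z ∂P0, eps ≤ pi z.2.1 ∧ pi z.2.1 ≤ 1 - eps := by
    filter_upwards [hpi_range] with z hz; exact ⟨hz.1, hz.2⟩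
  have hpiint : Integrable (fun z : Obs X => pi z.2.1) P0 :=
    memLp_one_iff_integrable.1 (MemLp.of_bound (hpi.1.comp hprojm).aestronglyMeasurable 1
      (by filter_upwards [hpir'] with z hz; rw [Real.norm_eq_abs, abs_le]; constructor <;> nlinarith [hz.1, hz.2]))
  -- bounds on μ a
  have hbound : ∀ a, ∀ᵐ z ∂P0, |μ a z.2.1| ≤ CY := by
    intro a
    have hub : ∀ᵐ z ∂P0, μ a z.2.1 ≤ CY :=
      bound_aux P0 (fun z => z.1) hyint CY
        (by filter_upwards [hY] with z hz; exact le_of_abs_le hz)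
        (μ a) (hμm a) (hμint a) a ((hμ a).2.2) eps heps pi hpi.1 hpi.2 hpir'
    have hlb : ∀ᵐ z ∂P0, -μ a z.2.1 ≤ CY := by
      refine bound_aux P0 (fun z => -z.1) hyint.neg CY
        (by filter_upwards [hY] with z hz; cases abs_le.mp hz; linarith)
        (fun x => -μ a x) (hμm a).neg (hμint a).neg a ?_ eps heps pi hpi.1 hpi.2 hpir'
      intro B hB
      rw [integral_neg, integral_neg, (hμ a).2.2 B hB]
    filter_upwards [hub, hlb] with z h1 h2
    rw [abs_le]; exact ⟨by linarith, h1⟩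
  -- bound on gβ
  set M : ℝ := (2*CY + |β0|)/V with hM
  have hM0 : 0 ≤ M := div_nonneg (by positivity) hVpos.le
  have hgbd : ∀ᵐ z ∂P0, |gβ z.2.1| ≤ M := by
    filter_upwards [hbound true, hbound false] with z h1 h2
    rw [hgβ]
    simp only
    rw [abs_div, abs_of_pos hVpos, hM]
    refine (div_le_div_iff_of_pos_right hVpos).mpr ?_
    have h3 : |μ true z.2.1 - μ false z.2.1 - β0| ≤ 2*CY + |β0| := by
      have ha := abs_le.mp h1
      have hb := abs_le.mp h2
      rw [abs_le]
      constructor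
      · linarith [ha.1, ha.2, hb.1, hb.2, le_abs_self β0]
      · linarith [ha.1, ha.2, hb.1, hb.2, neg_abs_le β0]
    calc |τ z.2.1 - β0| = |μ true z.2.1 - μ false z.2.1 - β0| := by rw [hτ]
      _ ≤ 2*CY + |β0| := h3
  set δ : ℝ := 1/(2*(M+1)) with hδ
  have hδpos : 0 < δ := by positivity
  have hδM : δ * M ≤ 1/2 := by
    have hM1 : (0:ℝ) < 2*(M+1) := by linarith
    calc δ * M = M / (2*(M+1)) := by rw [hδ]; ring
      _ ≤ 1/2 := by rw [div_le_div_iff₀ hM1 two_pos]; linarith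
  have hwbd : ∀ t : ℝ, |t| < δ → ∀ᵐ z ∂P0,
      1/2 ≤ 1 + t * gβ z.2.1 ∧ 1 + t * gβ z.2.1 ≤ 3/2 := by
    intro t ht
    filter_upwards [hgbd] with z hz
    have habs : |t * gβ z.2.1| ≤ 1/2 := by
      rw [abs_mul]
      calc |t| * |gβ z.2.1| ≤ δ * M :=
            mul_le_mul ht.le hz (abs_nonneg _) hδpos.le
        _ ≤ 1/2 := hδM
    have := abs_le.mp habs
    constructor <;> [linarith [this.1]; linarith [this.2]]
  -- representation of Pt as a tilt of P0
  have hWm : ∀ t : ℝ, Measurable (fun x : X => 1 + t * gβ x) :=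
    fun t => measurable_const.add (hgm.const_mul t)
  have hPtP : ∀ t : ℝ, Pt t
      = P0.withDensity (fun z => ENNReal.ofReal (1 + t * gβ z.2.1)) := by
    intro t
    have hWz : Measurable (fun z : Obs X => 1 + t * gβ z.2.1) :=
      measurable_const.add ((hgm.comp hprojm).const_mul t)
    have hmul := withDensity_mul (μ := ν) (f := fun z => ENNReal.ofReal (p0 z))
      (g := fun z : Obs X => ENNReal.ofReal (1 + t * gβ z.2.1))
      hp0_meas.ennreal_ofReal hWz.ennreal_ofReal
    rw [hp0', ← hmul]
    simp only [hPt]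
    refine withDensity_congr_ae ?_
    filter_upwards [hp0_nonneg] with z hz
    rw [Pi.mul_apply, ← ENNReal.ofReal_mul hz]
  have hPt0 : Pt 0 = P0 := by
    rw [hPtP 0]
    simp [withDensity_one]
  -- mean-zero score
  have hgβ_mean : ∫ z, gβ z.2.1 ∂P0 = 0 := by
    have h1 : ∫ z, gβ z.2.1 ∂P0 = ∫ z, (τ z.2.1 - β0) / V ∂P0 := by
      refine integral_congr_ae (ae_of_all _ fun z => ?_)
      rw [hgβ]
    rw [h1, integral_div, integral_sub hτint (integrable_const β0), integral_const]
    simp [measure_univ, ← hβ0]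
  -- probability measures
  have hprob : ∀ t : ℝ, |t| < δ → IsProbabilityMeasure (Pt t) := by
    intro t ht
    have hwint : Integrable (fun z : Obs X => 1 + t * gβ z.2.1) P0 :=
      (integrable_const 1).add (hgβ_int.const_mul t)
    have hwnn : (fun _ : Obs X => (0:ℝ)) ≤ᵐ[P0] fun z => 1 + t * gβ z.2.1 := by
      filter_upwards [hwbd t ht] with z hz
      have h0 : (0:ℝ) ≤ 1 + t * gβ z.2.1 := by linarith [hz.1]
      exact h0
    constructor
    rw [hPtP t, withDensity_apply _ MeasurableSet.univ, Measure.restrict_univ,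
      ← ofReal_integral_eq_lintegral_ofReal hwint hwnn]
    rw [integral_add (integrable_const 1) (hgβ_int.const_mul t), integral_const,
      integral_const_mul, hgβ_mean]
    norm_num [measure_univ]
  have hmem : MemLp (fun z : Obs X => gβ z.2.1) 2 P0 :=
    MemLp.of_bound hgm2.aestronglyMeasurable M
      (by filter_upwards [hgbd] with z hz; simpa [Real.norm_eq_abs] using hz)

  -- transfer the score bound to ν
  have hgbdν : ∀ᵐ z ∂ν, 0 ≤ p0 z ∧ (0 < p0 z → |gβ z.2.1| ≤ M) := by
    have h2 : ∀ᵐ z ∂ν, ENNReal.ofReal (p0 z) ≠ 0 → |gβ z.2.1| ≤ M := by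
      have h3 := hgbd
      rw [hp0', ae_withDensity_iff hp0_meas.ennreal_ofReal] at h3
      exact h3
    filter_upwards [hp0_nonneg, h2] with z h1 h2
    refine ⟨h1, fun hpos => h2 ?_⟩
    simp only [ne_eq, ENNReal.ofReal_eq_zero, not_le]
    exact hpos
  have hp0int : Integrable p0 ν := by
    refine ⟨hp0_meas.aestronglyMeasurable, ?_⟩
    rw [hasFiniteIntegral_iff_ofReal hp0_nonneg]
    have hmass : ∫⁻ z, ENNReal.ofReal (p0 z) ∂ν = P0 Set.univ := by
      rw [hp0', withDensity_apply _ MeasurableSet.univ, Measure.restrict_univ]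
    rw [hmass, measure_univ]
    exact one_lt_top
  have hQMD : Tendsto (fun t : ℝ => ∫ z,
        ((Real.sqrt (p0 z * (1 + t * gβ z.2.1)) - Real.sqrt (p0 z)) / t
          - (1/2) * gβ z.2.1 * Real.sqrt (p0 z)) ^ 2 ∂ν) (𝓝[≠] (0:ℝ)) (𝓝 0) := by
    have hev : ∀ᶠ t : ℝ in 𝓝[≠] (0:ℝ), |t| < δ ∧ t ≠ 0 := by
      refine Filter.Eventually.and ?_ (eventually_mem_nhdsWithin.mono fun t ht => ht)
      refine eventually_nhdsWithin_of_eventually_nhds ?_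
      filter_upwards [Metric.ball_mem_nhds (0:ℝ) hδpos] with t ht
      simpa [Real.dist_eq] using ht
    have key := tendsto_integral_filter_of_dominated_convergence (μ := ν)
      (l := 𝓝[≠] (0:ℝ))
      (F := fun (t : ℝ) (z : Obs X) =>
        ((Real.sqrt (p0 z * (1 + t * gβ z.2.1)) - Real.sqrt (p0 z)) / t
          - (1/2) * gβ z.2.1 * Real.sqrt (p0 z)) ^ 2)
      (f := fun _ : Obs X => (0:ℝ)) (bound := fun z => (M + M/2)^2 * p0 z) ?_ ?_ ?_ ?_
    · simpa using key
    · refine Filter.Eventually.of_forall fun t => Measurable.aestronglyMeasurable ?_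
      refine Measurable.pow_const (Measurable.sub ?_ ?_) 2
      · exact ((hp0_meas.mul (measurable_const.add (hgm2.const_mul t))).sqrt.sub
          hp0_meas.sqrt).div_const t
      · exact (measurable_const.mul hgm2).mul hp0_meas.sqrt
    · filter_upwards [hev] with t ht
      obtain ⟨htδ, htne⟩ := ht
      filter_upwards [hgbdν] with z hz
      obtain ⟨hznn, hzimp⟩ := hz
      rcases eq_or_lt_of_le hznn with h0 | hpos
      · rw [← h0]
        simp [Real.sqrt_zero]
      · have hg : |gβ z.2.1| ≤ M := hzimp hpos
        have htg : |t * gβ z.2.1| ≤ 1/2 := by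
          rw [abs_mul]
          calc |t| * |gβ z.2.1| ≤ δ * M := mul_le_mul htδ.le hg (abs_nonneg _) hδpos.le
            _ ≤ 1/2 := hδM
        have hinner := sqrt_slope_bound htne hg htg
        have hinner' := abs_le.mp hinner
        have hrw : (Real.sqrt (p0 z * (1 + t * gβ z.2.1)) - Real.sqrt (p0 z)) / t
            - (1/2) * gβ z.2.1 * Real.sqrt (p0 z)
            = Real.sqrt (p0 z)
              * ((Real.sqrt (1 + t * gβ z.2.1) - 1) / t - gβ z.2.1 / 2) := by
          rw [Real.sqrt_mul hznn]
          field_simp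
        rw [Real.norm_eq_abs, abs_of_nonneg (sq_nonneg _), hrw, mul_pow,
          Real.sq_sqrt hznn, mul_comm]
        refine mul_le_mul_of_nonneg_right ?_ hznn
        exact sq_le_sq' (by linarith) (by linarith)
    · exact hp0int.const_mul _
    · filter_upwards [hgbdν] with z hz
      rcases eq_or_lt_of_le hz.1 with h0 | hpos
      · have hzz : ∀ t : ℝ, ((Real.sqrt (p0 z * (1 + t * gβ z.2.1)) - Real.sqrt (p0 z)) / t
            - (1/2) * gβ z.2.1 * Real.sqrt (p0 z)) ^ 2 = 0 := by
          intro t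
          rw [← h0]
          simp [Real.sqrt_zero]
        rw [show (fun t : ℝ => ((Real.sqrt (p0 z * (1 + t * gβ z.2.1)) - Real.sqrt (p0 z)) / t
            - (1/2) * gβ z.2.1 * Real.sqrt (p0 z)) ^ 2) = fun _ => (0:ℝ) from funext hzz]
        exact tendsto_const_nhds
      · have hc : Tendsto (fun _ : ℝ => gβ z.2.1 / 2) (𝓝[≠] (0:ℝ)) (𝓝 (gβ z.2.1 / 2)) :=
          tendsto_const_nhds
        have hlim := (((sqrt_slope_tendsto (gβ z.2.1)).sub hc).const_mul
          (Real.sqrt (p0 z))).pow 2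
        have hval : (Real.sqrt (p0 z) * (gβ z.2.1 / 2 - gβ z.2.1 / 2)) ^ 2 = 0 := by
          simp
        rw [hval] at hlim
        refine Tendsto.congr' ?_ hlim
        filter_upwards [eventually_mem_nhdsWithin] with t ht
        have hrw : (Real.sqrt (p0 z * (1 + t * gβ z.2.1)) - Real.sqrt (p0 z)) / t
            - (1/2) * gβ z.2.1 * Real.sqrt (p0 z)
            = Real.sqrt (p0 z)
              * ((Real.sqrt (1 + t * gβ z.2.1) - 1) / t - gβ z.2.1 / 2) := by
          rw [Real.sqrt_mul hz.1]
          have htne : t ≠ 0 := ht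
          field_simp
        rw [hrw]
  -- tilt formulas
  have tilt : ∀ t : ℝ, |t| < δ → ∀ f : Obs X → ℝ, ∀ s : Set (Obs X), MeasurableSet s →
      ∫ z in s, f z ∂(Pt t) = ∫ z in s, f z * (1 + t * gβ z.2.1) ∂P0 := by
    intro t ht f s hs
    have hWz : Measurable (fun z : Obs X => (1 + t * gβ z.2.1).toNNReal) :=
      measurable_real_toNNReal.comp (measurable_const.add (hgm2.const_mul t))
    rw [hPtP t, restrict_withDensity hs]
    have h1 : ∫ z, f z ∂((P0.restrict s).withDensity
        (fun z : Obs X => ENNReal.ofReal (1 + t * gβ z.2.1)))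
        = ∫ z, (1 + t * gβ z.2.1).toNNReal • f z ∂(P0.restrict s) :=
      integral_withDensity_eq_integral_smul hWz f
    rw [h1]
    refine integral_congr_ae ?_
    filter_upwards [ae_restrict_of_ae ((hwbd t ht).mono fun z hz => hz.1)] with z hz
    rw [NNReal.smul_def, smul_eq_mul, Real.coe_toNNReal _ (by linarith), mul_comm]
  have tiltInt : ∀ t : ℝ, |t| < δ → ∀ f : Obs X → ℝ, Integrable f P0 → Integrable f (Pt t) := by
    intro t ht f hf
    have hWz : Measurable (fun z : Obs X => ENNReal.ofReal (1 + t * gβ z.2.1)) :=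
      (measurable_const.add (hgm2.const_mul t)).ennreal_ofReal
    rw [hPtP t, integrable_withDensity_iff hWz
      (Filter.Eventually.of_forall fun z => ofReal_lt_top)]
    have hb : ∀ᵐ z ∂P0, ‖(ENNReal.ofReal (1 + t * gβ z.2.1)).toReal‖ ≤ (3:ℝ)/2 := by
      filter_upwards [hwbd t ht] with z hz
      rw [ENNReal.toReal_ofReal (by linarith [hz.1]), Real.norm_eq_abs,
        abs_of_nonneg (by linarith [hz.1])]
      exact hz.2
    have := hf.bdd_mul hWz.ennreal_toReal.aestronglyMeasurable hb
    exact this.congr (ae_of_all _ fun z => mul_comm _ _)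
  have mulInt : ∀ t : ℝ, |t| < δ → ∀ f : Obs X → ℝ, Integrable f P0 →
      Integrable (fun z => f z * (1 + t * gβ z.2.1)) P0 := by
    intro t ht f hf
    have hb : ∀ᵐ z ∂P0, ‖1 + t * gβ z.2.1‖ ≤ (3:ℝ)/2 := by
      filter_upwards [hwbd t ht] with z hz
      rw [Real.norm_eq_abs, abs_of_nonneg (by linarith [hz.1])]
      exact hz.2
    have := hf.bdd_mul (measurable_const.add (hgm2.const_mul t)).aestronglyMeasurable hb
    exact this.congr (ae_of_all _ fun z => mul_comm _ _)
  -- orthogonality data for the conditional means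
  have hindm : ∀ a : Bool, Measurable (fun z : Obs X => if z.2.2 = a then (1:ℝ) else 0) :=
    fun a => Measurable.ite ((measurable_snd.comp measurable_snd) (measurableSet_singleton a))
      measurable_const measurable_const
  have hDint : ∀ a : Bool, Integrable
      (fun z : Obs X => (z.1 - μ a z.2.1) * (if z.2.2 = a then (1:ℝ) else 0)) P0 := by
    intro a
    have hsub : Integrable (fun z : Obs X => z.1 - μ a z.2.1) P0 := hyint.sub (hμint a)
    have hb : ∀ᵐ z ∂P0, ‖if z.2.2 = a then (1:ℝ) else 0‖ ≤ 1 :=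
      ae_of_all _ fun z => by by_cases h : z.2.2 = a <;> simp [h]
    exact (hsub.bdd_mul (hindm a).aestronglyMeasurable hb).congr
      (ae_of_all _ fun z => mul_comm _ _)
  have claimA : ∀ a : Bool, ∀ B : Set X, MeasurableSet B →
      ∫ z in {z : Obs X | z.2.1 ∈ B},
        (z.1 - μ a z.2.1) * (if z.2.2 = a then (1:ℝ) else 0) ∂P0 = 0 := by
    intro a B hB
    have hmB : MeasurableSet {z : Obs X | z.2.1 ∈ B} := hprojm hB
    rw [← integral_indicator hmB]
    have heq : (Set.indicator {z : Obs X | z.2.1 ∈ B}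
        (fun z : Obs X => (z.1 - μ a z.2.1) * (if z.2.2 = a then (1:ℝ) else 0)))
        = Set.indicator {z : Obs X | z.2.1 ∈ B ∧ z.2.2 = a}
            (fun z : Obs X => z.1 - μ a z.2.1) := by
      funext z
      by_cases h1 : z.2.1 ∈ B <;> by_cases h2 : z.2.2 = a <;>
        simp [Set.indicator_apply, h1, h2]
    rw [heq, integral_indicator (measurableSet_BA hB a),
      integral_sub hyint.integrableOn (hμint a).integrableOn, (hμ a).2.2 B hB, sub_self]
  have claimB : ∀ a : Bool, ∀ H : X → ℝ, Measurable H → ∀ C : ℝ,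
      (∀ᵐ z ∂P0, ‖H z.2.1‖ ≤ C) →
      ∫ z, H z.2.1 * ((z.1 - μ a z.2.1) * (if z.2.2 = a then (1:ℝ) else 0)) ∂P0 = 0 :=
    fun a H hH C hC => orth P0 _ (hDint a) (claimA a) H hH C hC
  -- orthogonality data for the propensity
  have hiteint : Integrable (fun z : Obs X => if z.2.2 = true then (1:ℝ) else 0) P0 :=
    memLp_one_iff_integrable.1 (MemLp.of_bound (hindm true).aestronglyMeasurable 1
      (ae_of_all _ fun z => by by_cases h : z.2.2 = true <;> simp [h]))
  have hD2int : Integrable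
      (fun z : Obs X => (if z.2.2 = true then (1:ℝ) else 0) - pi z.2.1) P0 :=
    hiteint.sub hpiint
  have claimA2 : ∀ B : Set X, MeasurableSet B →
      ∫ z in {z : Obs X | z.2.1 ∈ B},
        ((if z.2.2 = true then (1:ℝ) else 0) - pi z.2.1) ∂P0 = 0 := by
    intro B hB
    have hmB : MeasurableSet {z : Obs X | z.2.1 ∈ B} := hprojm hB
    rw [integral_sub hiteint.integrableOn hpiint.integrableOn]
    have h1 : ∫ z in {z : Obs X | z.2.1 ∈ B}, (if z.2.2 = true then (1:ℝ) else 0) ∂P0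
        = (P0 {z : Obs X | z.2.1 ∈ B ∧ z.2.2 = true}).toReal := by
      rw [← integral_indicator hmB]
      have heq : Set.indicator {z : Obs X | z.2.1 ∈ B}
          (fun z : Obs X => if z.2.2 = true then (1:ℝ) else 0)
          = Set.indicator {z : Obs X | z.2.1 ∈ B ∧ z.2.2 = true} (fun _ => (1:ℝ)) := by
        funext z
        by_cases h1 : z.2.1 ∈ B <;> by_cases h2 : z.2.2 = true <;>
          simp [Set.indicator_apply, h1, h2]
      rw [heq, integral_indicator (measurableSet_BA hB true), setIntegral_const,
        smul_eq_mul, mul_one, measureReal_def]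
    rw [h1, hpi.2 B hB, sub_self]
  have claimB2 : ∀ H : X → ℝ, Measurable H → ∀ C : ℝ, (∀ᵐ z ∂P0, ‖H z.2.1‖ ≤ C) →
      ∫ z, H z.2.1 * ((if z.2.2 = true then (1:ℝ) else 0) - pi z.2.1) ∂P0 = 0 :=
    fun H hH C hC => orth P0 _ hD2int claimA2 H hH C hC
  -- properties of the indicator-weight H
  have hHmeas : ∀ (B : Set X), MeasurableSet B → ∀ t : ℝ,
      Measurable (fun x : X => Set.indicator B (fun _ => (1:ℝ)) x * (1 + t * gβ x)) :=
    fun B hB t => (measurable_const.indicator hB).mul (hWm t)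
  have hHbd : ∀ (B : Set X) (t : ℝ), |t| < δ → ∀ᵐ z ∂P0,
      ‖Set.indicator B (fun _ => (1:ℝ)) z.2.1 * (1 + t * gβ z.2.1)‖ ≤ (3:ℝ)/2 := by
    intro B t ht
    filter_upwards [hwbd t ht] with z hz
    rw [norm_mul]
    have h1 : ‖Set.indicator B (fun _ => (1:ℝ)) z.2.1‖ ≤ 1 := by
      by_cases h : z.2.1 ∈ B <;> simp [h]
    have h2 : ‖1 + t * gβ z.2.1‖ ≤ (3:ℝ)/2 := by
      rw [Real.norm_eq_abs, abs_of_nonneg (by linarith [hz.1])]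
      exact hz.2
    calc ‖Set.indicator B (fun _ => (1:ℝ)) z.2.1‖ * ‖1 + t * gβ z.2.1‖
        ≤ 1 * ((3:ℝ)/2) := mul_le_mul h1 h2 (norm_nonneg _) one_pos.le
      _ = (3:ℝ)/2 := by ring
  refine ⟨δ, hδpos, hPt0, hprob, hmem, hgβ_mean, hQMD, ?_, ?_⟩
  · -- (2)
    intro t ht
    constructor
    · intro a
      refine ⟨hμm a, tiltInt t ht _ (hμint a), ?_⟩
      intro B hB
      rw [tilt t ht _ _ (measurableSet_BA hB a), tilt t ht _ _ (measurableSet_BA hB a)]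
      have hIy : IntegrableOn (fun z : Obs X => z.1 * (1 + t * gβ z.2.1))
          {z : Obs X | z.2.1 ∈ B ∧ z.2.2 = a} P0 := (mulInt t ht _ hyint).integrableOn
      have hIμ : IntegrableOn (fun z : Obs X => μ a z.2.1 * (1 + t * gβ z.2.1))
          {z : Obs X | z.2.1 ∈ B ∧ z.2.2 = a} P0 := (mulInt t ht _ (hμint a)).integrableOn
      have hdiff := claimB a (fun x => Set.indicator B (fun _ => (1:ℝ)) x * (1 + t * gβ x))
        (hHmeas B hB t) ((3:ℝ)/2) (hHbd B t ht)
      have heq : ∀ z : Obs X, Set.indicator {z : Obs X | z.2.1 ∈ B ∧ z.2.2 = a}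
          (fun z : Obs X => z.1 * (1 + t * gβ z.2.1) - μ a z.2.1 * (1 + t * gβ z.2.1)) z
          = (Set.indicator B (fun _ => (1:ℝ)) z.2.1 * (1 + t * gβ z.2.1))
            * ((z.1 - μ a z.2.1) * (if z.2.2 = a then (1:ℝ) else 0)) := by
        intro z
        by_cases h1 : z.2.1 ∈ B <;> by_cases h2 : z.2.2 = a <;>
          simp [Set.indicator_apply, h1, h2] <;> ring
      have hkey : ∫ z in {z : Obs X | z.2.1 ∈ B ∧ z.2.2 = a}, z.1 * (1 + t * gβ z.2.1) ∂P0
          - ∫ z in {z : Obs X | z.2.1 ∈ B ∧ z.2.2 = a}, μ a z.2.1 * (1 + t * gβ z.2.1) ∂P0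
          = 0 := by
        rw [← integral_sub hIy hIμ, ← integral_indicator (measurableSet_BA hB a),
          show (Set.indicator {z : Obs X | z.2.1 ∈ B ∧ z.2.2 = a}
            (fun z : Obs X => z.1 * (1 + t * gβ z.2.1) - μ a z.2.1 * (1 + t * gβ z.2.1)))
            = fun z : Obs X => (Set.indicator B (fun _ => (1:ℝ)) z.2.1 * (1 + t * gβ z.2.1))
              * ((z.1 - μ a z.2.1) * (if z.2.2 = a then (1:ℝ) else 0)) from funext heq]
        exact hdiff
      linarith [hkey]
    · refine ⟨hpi.1, ?_⟩
      intro B hB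
      have hmB : MeasurableSet {z : Obs X | z.2.1 ∈ B} := hprojm hB
      rw [tilt t ht _ {z : Obs X | z.2.1 ∈ B} hmB]
      have hLHS : ((Pt t) {z : Obs X | z.2.1 ∈ B ∧ z.2.2 = true}).toReal
          = ∫ z in {z : Obs X | z.2.1 ∈ B ∧ z.2.2 = true}, (1 + t * gβ z.2.1) ∂P0 := by
        rw [hPtP t, withDensity_apply _ (measurableSet_BA hB true)]
        rw [integral_eq_lintegral_of_nonneg_ae (f := fun z : Obs X => 1 + t * gβ z.2.1)
          (ae_restrict_of_ae ((hwbd t ht).mono fun z hz => by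
            have : (0:ℝ) ≤ 1 + t * gβ z.2.1 := by linarith [hz.1]
            exact this))
          (measurable_const.add (hgm2.const_mul t)).aestronglyMeasurable.restrict]
      rw [hLHS]
      have hIT : Integrable (Set.indicator {z : Obs X | z.2.1 ∈ B ∧ z.2.2 = true}
          (fun z : Obs X => 1 + t * gβ z.2.1)) P0 := by
        refine Integrable.indicator ?_ (measurableSet_BA hB true)
        exact ((mulInt t ht (fun _ => (1:ℝ)) (integrable_const 1)).congr
          (ae_of_all _ fun z => one_mul _))
      have hIUB : Integrable (Set.indicator {z : Obs X | z.2.1 ∈ B}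
          (fun z : Obs X => pi z.2.1 * (1 + t * gβ z.2.1))) P0 :=
        (mulInt t ht _ hpiint).indicator hmB
      have hdiff := claimB2 (fun x => Set.indicator B (fun _ => (1:ℝ)) x * (1 + t * gβ x))
        (hHmeas B hB t) ((3:ℝ)/2) (hHbd B t ht)
      have heq : ∀ z : Obs X,
          Set.indicator {z : Obs X | z.2.1 ∈ B ∧ z.2.2 = true}
            (fun z : Obs X => 1 + t * gβ z.2.1) z
          - Set.indicator {z : Obs X | z.2.1 ∈ B}
            (fun z : Obs X => pi z.2.1 * (1 + t * gβ z.2.1)) z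
          = (Set.indicator B (fun _ => (1:ℝ)) z.2.1 * (1 + t * gβ z.2.1))
            * ((if z.2.2 = true then (1:ℝ) else 0) - pi z.2.1) := by
        intro z
        by_cases h1 : z.2.1 ∈ B <;> by_cases h2 : z.2.2 = true <;>
          simp [Set.indicator_apply, h1, h2] <;> ring
      have hkey : ∫ z in {z : Obs X | z.2.1 ∈ B ∧ z.2.2 = true}, (1 + t * gβ z.2.1) ∂P0
          - ∫ z in {z : Obs X | z.2.1 ∈ B}, pi z.2.1 * (1 + t * gβ z.2.1) ∂P0 = 0 := by
        rw [← integral_indicator (measurableSet_BA hB true), ← integral_indicator hmB,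
          ← integral_sub hIT hIUB,
          show (fun z : Obs X =>
              Set.indicator {z : Obs X | z.2.1 ∈ B ∧ z.2.2 = true}
                (fun z : Obs X => 1 + t * gβ z.2.1) z
              - Set.indicator {z : Obs X | z.2.1 ∈ B}
                (fun z : Obs X => pi z.2.1 * (1 + t * gβ z.2.1)) z)
            = fun z : Obs X => (Set.indicator B (fun _ => (1:ℝ)) z.2.1 * (1 + t * gβ z.2.1))
              * ((if z.2.2 = true then (1:ℝ) else 0) - pi z.2.1) from funext heq]
        exact hdiff
      linarith [hkey]
  · -- (3)
    intro t ht
    have h1 := tilt t ht (fun z : Obs X => τ z.2.1) Set.univ MeasurableSet.univ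
    rw [Measure.restrict_univ, Measure.restrict_univ] at h1
    have h2 : ∫ z, (μ true z.2.1 - μ false z.2.1) ∂(Pt t) = ∫ z, τ z.2.1 ∂(Pt t) := by
      refine integral_congr_ae (ae_of_all _ fun z => ?_)
      rw [hτ]
    rw [h2, h1]
    have hτg_int : Integrable (fun z : Obs X => τ z.2.1 * gβ z.2.1) P0 := by
      have hb : ∀ᵐ z ∂P0, ‖gβ z.2.1‖ ≤ M := by
        filter_upwards [hgbd] with z hz
        rwa [Real.norm_eq_abs]
      have := hτint.bdd_mul hgm2.aestronglyMeasurable hb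
      exact this.congr (ae_of_all _ fun z => mul_comm _ _)
    have hV0 : V ≠ 0 := hVpos.ne'
    have hsq_int : Integrable (fun z : Obs X => (τ z.2.1 - β0)^2) P0 := by
      refine memLp_one_iff_integrable.1 (MemLp.of_bound
        (((hτm.comp hprojm).sub measurable_const).pow_const 2).aestronglyMeasurable
        ((2*CY + |β0|)^2) ?_)
      filter_upwards [hbound true, hbound false] with z h1 h2
      have ha := abs_le.mp h1
      have hb := abs_le.mp h2
      have hτz : τ z.2.1 = μ true z.2.1 - μ false z.2.1 := by rw [hτ]
      have habs : |τ z.2.1 - β0| ≤ 2*CY + |β0| := by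
        rw [hτz, abs_le]
        constructor
        · linarith [ha.1, ha.2, hb.1, hb.2, le_abs_self β0]
        · linarith [ha.1, ha.2, hb.1, hb.2, neg_abs_le β0]
      rw [Real.norm_eq_abs, abs_of_nonneg (sq_nonneg _)]
      calc (τ z.2.1 - β0)^2 = |τ z.2.1 - β0|^2 := (sq_abs _).symm
        _ ≤ (2*CY + |β0|)^2 := by
            apply pow_le_pow_left₀ (abs_nonneg _) habs
    have hτgβ : ∫ z, τ z.2.1 * gβ z.2.1 ∂P0 = 1 := by
      have heq : ∀ z : Obs X, τ z.2.1 * gβ z.2.1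
          = ((τ z.2.1 - β0)^2 + β0 * (τ z.2.1 - β0)) / V := by
        intro z
        simp only [hgβ]
        field_simp
        ring
      have hτβint : Integrable (fun z : Obs X => τ z.2.1 - β0) P0 :=
        hτint.sub (integrable_const β0)
      rw [integral_congr_ae (ae_of_all _ heq), integral_div,
        integral_add hsq_int (hτβint.const_mul β0), ← hV,
        integral_const_mul, integral_sub hτint (integrable_const β0), integral_const,
        probReal_univ, one_smul, ← hβ0, sub_self, mul_zero, add_zero]
      exact div_self hV0
    have hsplit : ∫ z, τ z.2.1 * (1 + t * gβ z.2.1) ∂P0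
        = ∫ z, τ z.2.1 ∂P0 + t * ∫ z, τ z.2.1 * gβ z.2.1 ∂P0 := by
      rw [← integral_const_mul t, ← integral_add hτint (hτg_int.const_mul t)]
      refine integral_congr_ae (ae_of_all _ fun z => ?_)
      ring
    rw [hsplit, hτgβ, ← hβ0]
    ring


end ATE
end

section
/- Let P₀ be a distribution for Z = (Y, X, A) with density p₀ with respect to a σ-finite measure ν, with |Y| ≤ C_Y almost surely and π(x) := P₀(A=1|X=x) ∈ [ε, 1−ε] almost surely; set μ_a(x) := E₀[Y|X=x,A=a], τ(x) := μ₁(x) − μ₀(x), β₀ := E₀[τ(X)], and let φ(Z) := (A/π(X))(Y − μ₁(X)) − ((1−A)/(1−π(X)))(Y − μ₀(X)) + τ(X) − β₀. Then for every P₀-essentially bounded g with E₀[g] = 0 and the linear tilt submodel P_t with density p₀(1 + t g), the map t ↦ β(P_t) := E_{P_t}[μ₁^{P_t}(X) − μ₀^{P_t}(X)] is differentiable at t = 0 with (d/dt) β(P_t) |_{t=0} = E₀[φ(Z) g(Z)]. -/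
/-! STATEMENT 17: pathwise differentiability of the ATE along linear tilt submodels:
(d/dt) β(P_t)|₀ = E₀[φ(Z) g(Z)] where φ is the (efficient) influence function of the
average treatment effect. -/

open MeasureTheory Filter Topology Set ENNReal

namespace ATE

variable {X : Type*} [MeasurableSpace X]

def mS (X : Type*) [MeasurableSpace X] : MeasurableSpace (Obs X) :=
  MeasurableSpace.comap (fun z : Obs X => z.2.1) inferInstance

section Aux
variable {α : Type*} {m m0 : MeasurableSpace α} {μ : @Measure α m0}

lemma ae_abs_condexp_le (hm : m ≤ m0) [IsFiniteMeasure μ] {f : α → ℝ} {C : ℝ}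
    (hf : Integrable f μ) (hfC : ∀ᵐ x ∂μ, |f x| ≤ C) : ∀ᵐ x ∂μ, |(μ[f|m]) x| ≤ C := by
  have h1 : μ[f|m] ≤ᵐ[μ] μ[fun _ => C|m] :=
    condExp_mono hf (integrable_const C) (hfC.mono fun x h => (abs_le.1 h).2)
  have h2 : μ[fun _ => (-C)|m] ≤ᵐ[μ] μ[f|m] :=
    condExp_mono (integrable_const _) hf (hfC.mono fun x h => (abs_le.1 h).1)
  rw [condExp_const hm] at h1
  rw [condExp_const hm] at h2
  filter_upwards [h1, h2] with x h1 h2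
  exact abs_le.2 ⟨h2, h1⟩

lemma integral_mul_condexp (hm : m ≤ m0) [IsFiniteMeasure μ] {c v : α → ℝ}
    (hc : StronglyMeasurable[m] c) (hv : Integrable v μ)
    (hcv : Integrable (fun x => c x * v x) μ) :
    ∫ x, c x * v x ∂μ = ∫ x, c x * (μ[v|m]) x ∂μ := by
  have h := condExp_mul_of_stronglyMeasurable_left (μ := μ) hc hcv hv
  calc ∫ x, c x * v x ∂μ = ∫ x, (μ[fun x => c x * v x|m]) x ∂μ := (integral_condExp hm).symm
    _ = ∫ x, c x * (μ[v|m]) x ∂μ := integral_congr_ae h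

lemma condexp_congr_setIntegral (hm : m ≤ m0) [IsFiniteMeasure μ] {f₁ f₂ : α → ℝ}
    (hf₁ : Integrable f₁ μ) (hf₂ : Integrable f₂ μ)
    (h : ∀ s, MeasurableSet[m] s → ∫ x in s, f₁ x ∂μ = ∫ x in s, f₂ x ∂μ) :
    μ[f₁|m] =ᵐ[μ] μ[f₂|m] := by
  refine (ae_eq_condExp_of_forall_setIntegral_eq hm hf₁
    (fun s _ _ => integrable_condExp.integrableOn) (fun s hs _ => ?_)
    (StronglyMeasurable.aestronglyMeasurable stronglyMeasurable_condExp)).symm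
  rw [setIntegral_condExp hm hf₂ hs]
  exact (h s hs).symm

lemma integrable_of_ae_bound [IsFiniteMeasure μ] {f : α → ℝ} {C : ℝ}
    (hmeas : AEStronglyMeasurable f μ) (h : ∀ᵐ x ∂μ, |f x| ≤ C) : Integrable f μ :=
  (integrable_const C).mono' hmeas (by simpa [Real.norm_eq_abs] using h)

end Aux

set_option maxHeartbeats 2000000 in
theorem ate_pathwise_derivative_along_linear_tilts
    (ν : Measure (Obs X)) [SigmaFinite ν]
    (P0 : Measure (Obs X)) [IsProbabilityMeasure P0]
    (p0 : Obs X → ℝ) (hp0_meas : Measurable p0) (hp0_nonneg : ∀ᵐ z ∂ν, 0 ≤ p0 z)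
    (hp0 : IsDensityOf ν P0 p0)
    (CY eps : ℝ) (heps : 0 < eps)
    (hY : ∀ᵐ z ∂P0, |z.1| ≤ CY)
    (μ : Bool → X → ℝ) (hμ : ∀ a, IsCondMean P0 a (μ a))
    (pi : X → ℝ) (hpi : IsPropensity P0 pi)
    (hpi_range : ∀ᵐ z ∂P0, pi z.2.1 ∈ Set.Icc eps (1 - eps))
    -- β₀ and the influence function φ of the ATE
    (β0 : ℝ) (hβ0 : β0 = ∫ z, (μ true z.2.1 - μ false z.2.1) ∂P0)
    (φ : Obs X → ℝ) (hφ : φ = aipw (μ true) (μ false) pi β0)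
    -- the bounded mean-zero perturbation g and the linear tilt family
    (g : Obs X → ℝ) (hg_meas : Measurable g)
    (M : ℝ) (hg_bdd : ∀ᵐ z ∂P0, |g z| ≤ M)
    (hg_mean : ∫ z, g z ∂P0 = 0)
    (Pt : ℝ → Measure (Obs X))
    (hPt : Pt = fun t => ν.withDensity
      (fun z => ENNReal.ofReal (p0 z * (1 + t * g z))))
    -- versions of the conditional means under the tilted measures
    (μt : ℝ → Bool → X → ℝ) (δ : ℝ) (hδ : 0 < δ)
    (hμt : ∀ t : ℝ, |t| < δ → |t| * M < 1 → ∀ a, IsCondMean (Pt t) a (μt t a)) :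
    HasDerivAt (fun t : ℝ => ∫ z, (μt t true z.2.1 - μt t false z.2.1) ∂(Pt t))
      (∫ z, φ z * g z ∂P0) 0 := by
  classical
  -- basic measurability
  have hX2 : Measurable (fun z : Obs X => z.2.1) := measurable_fst.comp measurable_snd
  have hA : Measurable (fun z : Obs X => z.2.2) := measurable_snd.comp measurable_snd
  have hm : mS X ≤ _ := hX2.comap_le
  have hX2m : Measurable[mS X] (fun z : Obs X => z.2.1) := comap_measurable _
  -- indicator of A = a
  set ind : Bool → Obs X → ℝ := fun a z => if z.2.2 = a then (1:ℝ) else 0 with hind_def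
  have hind_meas : ∀ a, Measurable (ind a) := by
    intro a
    exact Measurable.ite (hA (MeasurableSet.singleton a)) measurable_const measurable_const
  have hind_le : ∀ a z, |ind a z| ≤ 1 := by
    intro a z; simp only [hind_def]; split <;> simp
  -- basic constants
  have hM0 : 0 ≤ M := by
    obtain ⟨z, hz⟩ := hg_bdd.exists
    exact le_trans (abs_nonneg _) hz
  have hCY0 : 0 ≤ CY := by
    obtain ⟨z, hz⟩ := hY.exists
    exact le_trans (abs_nonneg _) hz
  have heps2 : eps ≤ 1/2 := by
    obtain ⟨z, hz⟩ := hpi_range.exists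
    have := le_trans hz.1 hz.2
    linarith
  set t1 : ℝ := min (δ/2) (eps/(2*(M+1))) with ht1_def
  have ht1pos : 0 < t1 := lt_min (by linarith) (by positivity)
  have ht1δ : t1 < δ := lt_of_le_of_lt (min_le_left _ _) (by linarith)
  have ht1eps : t1 ≤ eps/(2*(M+1)) := min_le_right _ _
  have ht1M : t1 * M ≤ eps/2 := by
    have h1 : t1 * M ≤ (eps/(2*(M+1))) * M := by
      apply mul_le_mul_of_nonneg_right ht1eps hM0
    have h2 : (eps/(2*(M+1))) * M ≤ eps/2 := by
      rw [div_mul_eq_mul_div, div_le_div_iff₀ (by positivity) (by norm_num)]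
      nlinarith
    linarith
  have ht1M' : t1 * M < 1 := by
    have : eps / 2 ≤ 1/4 := by linarith
    linarith
  have ht1le : t1 ≤ 1 := by
    have : eps/(2*(M+1)) ≤ eps/2 := by
      apply div_le_div_of_nonneg_left (le_of_lt heps) (by norm_num) (by nlinarith)
    nlinarith [ht1eps]
  -- conditional expectations under P0
  obtain ⟨hh, hh_def⟩ : ∃ x : Bool → Obs X → ℝ,
    x = fun a => P0[fun z => ind a z * z.1|mS X] := ⟨_, rfl⟩
  obtain ⟨kk, hkk_def⟩ : ∃ x : Bool → Obs X → ℝ,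
    x = fun a => P0[fun z => ind a z * z.1 * g z|mS X] := ⟨_, rfl⟩
  obtain ⟨rr, hrr_def⟩ : ∃ x : Bool → Obs X → ℝ,
    x = fun a => P0[ind a|mS X] := ⟨_, rfl⟩
  obtain ⟨ss, hss_def⟩ : ∃ x : Bool → Obs X → ℝ,
    x = fun a => P0[fun z => ind a z * g z|mS X] := ⟨_, rfl⟩
  obtain ⟨uu, huu_def⟩ : ∃ x : Obs X → ℝ, x = P0[g|mS X] := ⟨_, rfl⟩
  -- strong measurability of the conditional expectations w.r.t. mS X
  have hSMh : ∀ a, StronglyMeasurable[mS X] (hh a) := by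
    intro a; rw [hh_def]; exact stronglyMeasurable_condExp
  have hSMk : ∀ a, StronglyMeasurable[mS X] (kk a) := by
    intro a; rw [hkk_def]; exact stronglyMeasurable_condExp
  have hSMr : ∀ a, StronglyMeasurable[mS X] (rr a) := by
    intro a; rw [hrr_def]; exact stronglyMeasurable_condExp
  have hSMs : ∀ a, StronglyMeasurable[mS X] (ss a) := by
    intro a; rw [hss_def]; exact stronglyMeasurable_condExp
  have hSMu : StronglyMeasurable[mS X] uu := by
    rw [huu_def]; exact stronglyMeasurable_condExp
  have hMh : ∀ a, Measurable (hh a) := fun a => ((hSMh a).mono hm).measurable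
  have hMk : ∀ a, Measurable (kk a) := fun a => ((hSMk a).mono hm).measurable
  have hMr : ∀ a, Measurable (rr a) := fun a => ((hSMr a).mono hm).measurable
  have hMs : ∀ a, Measurable (ss a) := fun a => ((hSMs a).mono hm).measurable
  have hMu : Measurable uu := (hSMu.mono hm).measurable
  -- integrability of the base integrands
  have hint_h : ∀ a, Integrable (fun z : Obs X => ind a z * z.1) P0 := by
    intro a
    refine integrable_of_ae_bound (C := CY)
      ((hind_meas a).mul measurable_fst).aestronglyMeasurable ?_
    filter_upwards [hY] with z hz
    calc |ind a z * z.1| = |ind a z| * |z.1| := abs_mul _ _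
      _ ≤ 1 * CY := mul_le_mul (hind_le a z) hz (abs_nonneg _) zero_le_one
      _ = CY := one_mul _
  have hint_k : ∀ a, Integrable (fun z : Obs X => ind a z * z.1 * g z) P0 := by
    intro a
    refine integrable_of_ae_bound (C := CY * M)
      (((hind_meas a).mul measurable_fst).mul hg_meas).aestronglyMeasurable ?_
    filter_upwards [hY, hg_bdd] with z hz hgz
    calc |ind a z * z.1 * g z| = |ind a z| * |z.1| * |g z| := by rw [abs_mul, abs_mul]
      _ ≤ 1 * CY * M := by
          apply mul_le_mul _ hgz (abs_nonneg _) (by positivity)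
          exact mul_le_mul (hind_le a z) hz (abs_nonneg _) zero_le_one
      _ = CY * M := by ring
  have hint_r : ∀ a, Integrable (ind a) P0 := by
    intro a
    exact integrable_of_ae_bound (C := 1) (hind_meas a).aestronglyMeasurable
      (Eventually.of_forall (hind_le a))
  have hint_s : ∀ a, Integrable (fun z : Obs X => ind a z * g z) P0 := by
    intro a
    refine integrable_of_ae_bound (C := M)
      ((hind_meas a).mul hg_meas).aestronglyMeasurable ?_
    filter_upwards [hg_bdd] with z hgz
    calc |ind a z * g z| = |ind a z| * |g z| := abs_mul _ _
      _ ≤ 1 * M := mul_le_mul (hind_le a z) hgz (abs_nonneg _) zero_le_one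
      _ = M := one_mul _
  have hint_g : Integrable g P0 := integrable_of_ae_bound hg_meas.aestronglyMeasurable hg_bdd
  -- a.e. bounds on the conditional expectations
  have habs_h : ∀ a, ∀ᵐ z ∂P0, |hh a z| ≤ CY := by
    intro a
    rw [hh_def]
    refine ae_abs_condexp_le hm (hint_h a) ?_
    filter_upwards [hY] with z hz
    calc |ind a z * z.1| = |ind a z| * |z.1| := abs_mul _ _
      _ ≤ 1 * CY := mul_le_mul (hind_le a z) hz (abs_nonneg _) zero_le_one
      _ = CY := one_mul _
  have habs_k : ∀ a, ∀ᵐ z ∂P0, |kk a z| ≤ CY * M := by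
    intro a
    rw [hkk_def]
    refine ae_abs_condexp_le hm (hint_k a) ?_
    filter_upwards [hY, hg_bdd] with z hz hgz
    calc |ind a z * z.1 * g z| = |ind a z| * |z.1| * |g z| := by rw [abs_mul, abs_mul]
      _ ≤ 1 * CY * M := by
          apply mul_le_mul _ hgz (abs_nonneg _) (by positivity)
          exact mul_le_mul (hind_le a z) hz (abs_nonneg _) zero_le_one
      _ = CY * M := by ring
  have habs_s : ∀ a, ∀ᵐ z ∂P0, |ss a z| ≤ M := by
    intro a
    rw [hss_def]
    refine ae_abs_condexp_le hm (hint_s a) ?_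
    filter_upwards [hg_bdd] with z hgz
    calc |ind a z * g z| = |ind a z| * |g z| := abs_mul _ _
      _ ≤ 1 * M := mul_le_mul (hind_le a z) hgz (abs_nonneg _) zero_le_one
      _ = M := one_mul _
  have habs_u : ∀ᵐ z ∂P0, |uu z| ≤ M := by
    rw [huu_def]; exact ae_abs_condexp_le hm hint_g hg_bdd
  -- indicator set-integral reduction, valid for any measure
  have hind_setInt : ∀ (Q : Measure (Obs X)) (a : Bool) (v : Obs X → ℝ) (B : Set X),
      ∫ z in (fun z : Obs X => z.2.1) ⁻¹' B, ind a z * v z ∂Q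
        = ∫ z in {z : Obs X | z.2.1 ∈ B ∧ z.2.2 = a}, v z ∂Q := by
    intro Q a v B
    have h1 : (fun z : Obs X => ind a z * v z)
        = fun z => Set.indicator {z : Obs X | z.2.2 = a} v z := by
      funext z
      by_cases h : z.2.2 = a <;> simp [hind_def, h, Set.indicator_apply]
    rw [h1, setIntegral_indicator (show MeasurableSet {z : Obs X | z.2.2 = a} from hA (MeasurableSet.singleton a))]
    congr 1
  -- identification of rr with the propensity
  have hms : ∀ s : Set (Obs X), MeasurableSet[mS X] s →
      ∃ B : Set X, MeasurableSet B ∧ (fun z : Obs X => z.2.1) ⁻¹' B = s := fun s hs => hs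
  have hpi_bd : ∀ᵐ z ∂P0, |pi z.2.1| ≤ 1 := by
    filter_upwards [hpi_range] with z hz
    rw [abs_le]; constructor <;> [linarith [hz.1]; linarith [hz.2]]
  have hpi_int : Integrable (fun z : Obs X => pi z.2.1) P0 :=
    integrable_of_ae_bound ((hpi.1.comp hX2)).aestronglyMeasurable hpi_bd
  have hr1 : rr true =ᵐ[P0] fun z => pi z.2.1 := by
    rw [hrr_def]
    refine (ae_eq_condExp_of_forall_setIntegral_eq hm (hint_r true)
      (fun s _ _ => hpi_int.integrableOn) (fun s hs _ => ?_)
      (StronglyMeasurable.aestronglyMeasurable (hpi.1.comp hX2m).stronglyMeasurable)).symm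
    obtain ⟨B, hB, rfl⟩ := hms s hs
    have h2 := hind_setInt P0 true (fun _ => (1:ℝ)) B
    simp only [mul_one] at h2
    rw [show ∫ z in (fun z : Obs X => z.2.1) ⁻¹' B, ind true z ∂P0
        = ∫ z in {z : Obs X | z.2.1 ∈ B ∧ z.2.2 = true}, (1:ℝ) ∂P0 from h2]
    rw [setIntegral_const, smul_eq_mul, mul_one, measureReal_def, hpi.2 B hB]
    rfl
  have hr0 : rr false =ᵐ[P0] fun z => 1 - pi z.2.1 := by
    have e1 : ind false = (fun _ : Obs X => (1:ℝ)) - ind true := by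
      funext z
      rcases Bool.eq_false_or_eq_true z.2.2 with h | h <;> simp [hind_def, h]
    have e2 : rr false =ᵐ[P0] P0[fun _ : Obs X => (1:ℝ)|mS X] - rr true := by
      simp only [hrr_def]
      rw [e1]
      exact condExp_sub (integrable_const 1) (hint_r true) (mS X)
    have e3 : P0[fun _ : Obs X => (1:ℝ)|mS X] = fun _ => (1:ℝ) := condExp_const hm 1
    filter_upwards [e2, hr1] with z h2 h1
    rw [h2, Pi.sub_apply, e3, h1]
  have hrr1_rng : ∀ᵐ z ∂P0, eps ≤ rr true z ∧ rr true z ≤ 1 - eps := by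
    filter_upwards [hr1, hpi_range] with z h1 h2
    rw [h1]; exact ⟨h2.1, h2.2⟩
  have hrr0_rng : ∀ᵐ z ∂P0, eps ≤ rr false z ∧ rr false z ≤ 1 - eps := by
    filter_upwards [hr0, hpi_range] with z h1 h2
    rw [h1]; constructor <;> [linarith [h2.2]; linarith [h2.1]]
  have hrr_rng : ∀ a, ∀ᵐ z ∂P0, eps ≤ rr a z ∧ rr a z ≤ 1 - eps := by
    intro a; cases a
    · exact hrr0_rng
    · exact hrr1_rng
  -- identification of μ: hh a = μ a ∘ X * rr a a.e.
  have hμint : ∀ a, Integrable (fun z : Obs X => μ a z.2.1 * ind a z) P0 := by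
    intro a
    refine Integrable.mono' ((hμ a).2.1.abs) ?_ ?_
    · exact (((hμ a).1.comp hX2).mul (hind_meas a)).aestronglyMeasurable
    · refine Eventually.of_forall fun z => ?_
      simp only [Real.norm_eq_abs, abs_mul]
      calc |μ a z.2.1| * |ind a z| ≤ |μ a z.2.1| * 1 :=
            mul_le_mul_of_nonneg_left (hind_le a z) (abs_nonneg _)
        _ = |μ a z.2.1| := mul_one _
        _ ≤ |μ a z.2.1| := le_refl _
  have hμrel : ∀ a, hh a =ᵐ[P0] fun z => μ a z.2.1 * rr a z := by
    intro a
    rw [hh_def, hrr_def]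
    simp only
    have step1 : P0[fun z : Obs X => ind a z * z.1|mS X]
        =ᵐ[P0] P0[fun z : Obs X => μ a z.2.1 * ind a z|mS X] := by
      refine condexp_congr_setIntegral hm (hint_h a) (hμint a) (fun s hs => ?_)
      obtain ⟨B, hB, rfl⟩ := hms s hs
      rw [hind_setInt P0 a (fun z => z.1) B]
      have e1 : ∀ z : Obs X, μ a z.2.1 * ind a z = ind a z * μ a z.2.1 := fun z => mul_comm _ _
      rw [show (fun z : Obs X => μ a z.2.1 * ind a z) = fun z => ind a z * μ a z.2.1 from
        funext e1]
      rw [hind_setInt P0 a (fun z => μ a z.2.1) B]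
      exact (hμ a).2.2 B hB
    have step2 : P0[fun z : Obs X => μ a z.2.1 * ind a z|mS X]
        =ᵐ[P0] fun z => μ a z.2.1 * (P0[ind a|mS X]) z :=
      condExp_mul_of_stronglyMeasurable_left (μ := P0) (m := mS X)
        (f := fun z : Obs X => μ a z.2.1)
        ((hμ a).1.comp hX2m).stronglyMeasurable (hμint a) (hint_r a)
    exact step1.trans step2
  have hμ_bd : ∀ a, ∀ᵐ z ∂P0, |μ a z.2.1| ≤ CY / eps := by
    intro a
    filter_upwards [hμrel a, habs_h a, hrr_rng a] with z h1 h2 h3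
    have hrpos : 0 < rr a z := lt_of_lt_of_le heps h3.1
    rw [le_div_iff₀ heps]
    calc |μ a z.2.1| * eps ≤ |μ a z.2.1| * rr a z :=
          mul_le_mul_of_nonneg_left h3.1 (abs_nonneg _)
      _ = |μ a z.2.1 * rr a z| := by rw [abs_mul, abs_of_pos hrpos]
      _ = |hh a z| := by rw [h1]
      _ ≤ CY := h2
  -- tilt measure basics
  have hw_meas : ∀ t : ℝ, Measurable (fun z : Obs X => 1 + t * g z) := fun t =>
    measurable_const.add (measurable_const.mul hg_meas)
  have hPtP0 : ∀ t : ℝ, Pt t = P0.withDensity (fun z => ENNReal.ofReal (1 + t * g z)) := by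
    intro t
    have hp0' : P0 = ν.withDensity (fun z => ENNReal.ofReal (p0 z)) := hp0
    rw [hPt, hp0']
    simp only
    rw [← withDensity_mul ν hp0_meas.ennreal_ofReal (hw_meas t).ennreal_ofReal]
    apply withDensity_congr_ae
    filter_upwards [hp0_nonneg] with z hz
    exact ENNReal.ofReal_mul hz
  have key_int : ∀ (t : ℝ) {S : Set (Obs X)}, MeasurableSet S → ∀ f : Obs X → ℝ,
      ∫ z in S, f z ∂(Pt t) = ∫ z in S, max (1 + t * g z) 0 * f z ∂P0 := by
    intro t S hS f
    rw [hPtP0 t, restrict_withDensity hS]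
    have hd : Measurable (fun z : Obs X => (1 + t * g z).toNNReal) :=
      (hw_meas t).real_toNNReal
    rw [show (fun z : Obs X => ENNReal.ofReal (1 + t * g z))
        = fun z => ((1 + t * g z).toNNReal : ℝ≥0∞) from rfl]
    rw [integral_withDensity_eq_integral_smul hd]
    apply integral_congr_ae
    refine Eventually.of_forall fun z => ?_
    simp only [NNReal.smul_def, Real.coe_toNNReal', smul_eq_mul]
  have key_int0 : ∀ (t : ℝ) (f : Obs X → ℝ),
      ∫ z, f z ∂(Pt t) = ∫ z, max (1 + t * g z) 0 * f z ∂P0 := by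
    intro t f
    have := key_int t MeasurableSet.univ f
    simpa [Measure.restrict_univ] using this
  have key_integrable : ∀ (t : ℝ) (f : Obs X → ℝ), Integrable f (Pt t) ↔
      Integrable (fun z => max (1 + t * g z) 0 * f z) P0 := by
    intro t f
    rw [hPtP0 t]
    rw [show (fun z : Obs X => ENNReal.ofReal (1 + t * g z))
        = fun z => ((1 + t * g z).toNNReal : ℝ≥0∞) from rfl]
    rw [integrable_withDensity_iff_integrable_smul ((hw_meas t).real_toNNReal)]
    constructor <;> intro h <;> refine h.congr (Eventually.of_forall fun z => ?_) <;>
      simp only [NNReal.smul_def, Real.coe_toNNReal', smul_eq_mul]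
  have hw_ae : ∀ t : ℝ, |t| < t1 → ∀ᵐ z ∂P0, 1/2 ≤ 1 + t * g z ∧ max (1 + t * g z) 0 = 1 + t * g z := by
    intro t ht
    filter_upwards [hg_bdd] with z hz
    have h1 : |t * g z| ≤ t1 * M := by
      rw [abs_mul]
      exact mul_le_mul (le_of_lt ht) hz (abs_nonneg _) (le_of_lt ht1pos)
    have h2 : 1/2 ≤ 1 + t * g z := by
      have := abs_le.1 h1
      have : -(eps/2) ≤ t * g z := by linarith [this.1, ht1M]
      have heps1 : eps / 2 ≤ 1/4 := by linarith
      linarith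
    exact ⟨h2, max_eq_left (by linarith)⟩
  have hden : ∀ t : ℝ, |t| ≤ t1 → ∀ a, ∀ᵐ z ∂P0, eps/2 ≤ rr a z + t * ss a z := by
    intro t ht a
    filter_upwards [hrr_rng a, habs_s a] with z h1 h2
    have h3 : |t * ss a z| ≤ t1 * M := by
      rw [abs_mul]
      exact mul_le_mul ht h2 (abs_nonneg _) (le_of_lt ht1pos)
    have h4 := abs_le.1 h3
    have h5 := h1.1
    linarith [ht1M]
  have hq : ∀ t : ℝ, |t| < t1 → ∀ a,
      (fun z : Obs X => μt t a z.2.1 * (rr a z + t * ss a z))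
        =ᵐ[P0] (fun z => hh a z + t * kk a z) := by
    intro t ht a
    have htδ : |t| < δ := lt_trans ht ht1δ
    have htM : |t| * M < 1 :=
      lt_of_le_of_lt (mul_le_mul_of_nonneg_right (le_of_lt ht) hM0) ht1M'
    obtain ⟨hmt_meas, hmt_int, hmt_eq⟩ := hμt t htδ htM a
    have hIμ : Integrable (fun z : Obs X => max (1 + t * g z) 0 * μt t a z.2.1) P0 :=
      (key_integrable t _).1 hmt_int
    have hIμw : Integrable (fun z : Obs X => μt t a z.2.1 * (ind a z * (1 + t * g z))) P0 := by
      refine Integrable.mono' hIμ.abs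
        (((hmt_meas.comp hX2).mul ((hind_meas a).mul (hw_meas t))).aestronglyMeasurable) ?_
      filter_upwards [hw_ae t ht] with z hz
      rw [hz.2] at *
      simp only [Real.norm_eq_abs, abs_mul]
      have h0 : (0:ℝ) ≤ 1 + t * g z := by linarith [hz.1]
      have hia := hind_le a z
      have h1 : |ind a z| * |1 + t * g z| ≤ |1 + t * g z| := by
        nlinarith [abs_nonneg (1 + t * g z)]
      calc |μt t a z.2.1| * (|ind a z| * |1 + t * g z|)
          ≤ |μt t a z.2.1| * |1 + t * g z| :=
            mul_le_mul_of_nonneg_left h1 (abs_nonneg _)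
        _ = |1 + t * g z| * |μt t a z.2.1| := by ring
    have hIiw : Integrable (fun z : Obs X => ind a z * (1 + t * g z)) P0 := by
      refine integrable_of_ae_bound (C := 2)
        ((hind_meas a).mul (hw_meas t)).aestronglyMeasurable ?_
      filter_upwards [hg_bdd] with z hz
      have h3 : |t * g z| ≤ t1 * M := by
        rw [abs_mul]; exact mul_le_mul (le_of_lt ht) hz (abs_nonneg _) (le_of_lt ht1pos)
      have h4 := abs_le.1 h3
      rw [abs_mul]
      have h5 : |1 + t * g z| ≤ 2 := by
        rw [abs_le]; constructor <;> linarith [ht1M, heps2]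
      calc |ind a z| * |1 + t * g z| ≤ 1 * |1 + t * g z| :=
            mul_le_mul_of_nonneg_right (hind_le a z) (abs_nonneg _)
        _ = |1 + t * g z| := one_mul _
        _ ≤ 2 := h5
    have hIyw : Integrable (fun z : Obs X => ind a z * z.1 * (1 + t * g z)) P0 := by
      refine integrable_of_ae_bound (C := CY * 2)
        (((hind_meas a).mul measurable_fst).mul (hw_meas t)).aestronglyMeasurable ?_
      filter_upwards [hg_bdd, hY] with z hz hYz
      have h3 : |t * g z| ≤ t1 * M := by
        rw [abs_mul]; exact mul_le_mul (le_of_lt ht) hz (abs_nonneg _) (le_of_lt ht1pos)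
      have h4 := abs_le.1 h3
      have h5 : |1 + t * g z| ≤ 2 := by
        rw [abs_le]; constructor <;> linarith [ht1M, heps2]
      rw [abs_mul, abs_mul]
      calc |ind a z| * |z.1| * |1 + t * g z| ≤ 1 * CY * 2 := by
            apply mul_le_mul _ h5 (abs_nonneg _) (by positivity)
            exact mul_le_mul (hind_le a z) hYz (abs_nonneg _) zero_le_one
        _ = CY * 2 := by ring
    have stepA : P0[fun z : Obs X => ind a z * z.1 * (1 + t * g z)|mS X]
        =ᵐ[P0] P0[fun z : Obs X => μt t a z.2.1 * (ind a z * (1 + t * g z))|mS X] := by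
      refine condexp_congr_setIntegral hm hIyw hIμw (fun s hs => ?_)
      obtain ⟨B, hB, rfl⟩ := hms s hs
      have hSB : MeasurableSet {z : Obs X | z.2.1 ∈ B ∧ z.2.2 = a} :=
        (hX2 hB).inter (hA (MeasurableSet.singleton a))
      have e1 : (fun z : Obs X => ind a z * z.1 * (1 + t * g z))
          = fun z => ind a z * (z.1 * (1 + t * g z)) := by funext z; ring
      have e2 : (fun z : Obs X => μt t a z.2.1 * (ind a z * (1 + t * g z)))
          = fun z => ind a z * (μt t a z.2.1 * (1 + t * g z)) := by funext z; ring
      rw [e1, e2, hind_setInt P0 a _ B, hind_setInt P0 a _ B]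
      have c1 : ∫ z in {z : Obs X | z.2.1 ∈ B ∧ z.2.2 = a}, z.1 * (1 + t * g z) ∂P0
          = ∫ z in {z : Obs X | z.2.1 ∈ B ∧ z.2.2 = a}, max (1 + t * g z) 0 * z.1 ∂P0 := by
        refine setIntegral_congr_ae hSB ?_
        filter_upwards [hw_ae t ht] with z hz _
        rw [hz.2]; ring
      have c2 : ∫ z in {z : Obs X | z.2.1 ∈ B ∧ z.2.2 = a}, μt t a z.2.1 * (1 + t * g z) ∂P0
          = ∫ z in {z : Obs X | z.2.1 ∈ B ∧ z.2.2 = a}, max (1 + t * g z) 0 * μt t a z.2.1 ∂P0 := by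
        refine setIntegral_congr_ae hSB ?_
        filter_upwards [hw_ae t ht] with z hz _
        rw [hz.2]; ring
      rw [c1, c2, ← key_int t hSB (fun z => z.1), ← key_int t hSB (fun z => μt t a z.2.1)]
      exact hmt_eq B hB
    have stepB : P0[fun z : Obs X => μt t a z.2.1 * (ind a z * (1 + t * g z))|mS X]
        =ᵐ[P0] fun z => μt t a z.2.1 * (P0[fun z : Obs X => ind a z * (1 + t * g z)|mS X]) z :=
      condExp_mul_of_stronglyMeasurable_left (μ := P0) (m := mS X)
        (f := fun z : Obs X => μt t a z.2.1)
        ((hmt_meas.comp hX2m).stronglyMeasurable) hIμw hIiw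
    have stepC : P0[fun z : Obs X => ind a z * (1 + t * g z)|mS X]
        =ᵐ[P0] fun z => rr a z + t * ss a z := by
      have e : (fun z : Obs X => ind a z * (1 + t * g z))
          = ind a + t • (fun z : Obs X => ind a z * g z) := by
        funext z; simp only [Pi.add_apply, Pi.smul_apply, smul_eq_mul]; ring
      rw [e]
      refine (condExp_add (hint_r a) ((hint_s a).smul t) (mS X)).trans ?_
      have h2 := condExp_smul (μ := P0) (m := mS X) t (fun z : Obs X => ind a z * g z)
      filter_upwards [h2] with z h2z
      simp only [hrr_def, hss_def, Pi.add_apply, h2z, Pi.smul_apply, smul_eq_mul]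
    have stepD : P0[fun z : Obs X => ind a z * z.1 * (1 + t * g z)|mS X]
        =ᵐ[P0] fun z => hh a z + t * kk a z := by
      have e : (fun z : Obs X => ind a z * z.1 * (1 + t * g z))
          = (fun z : Obs X => ind a z * z.1) + t • (fun z : Obs X => ind a z * z.1 * g z) := by
        funext z; simp only [Pi.add_apply, Pi.smul_apply, smul_eq_mul]; ring
      rw [e]
      refine (condExp_add (hint_h a) ((hint_k a).smul t) (mS X)).trans ?_
      have h2 := condExp_smul (μ := P0) (m := mS X) t (fun z : Obs X => ind a z * z.1 * g z)
      filter_upwards [h2] with z h2z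
      simp only [hh_def, hkk_def, Pi.add_apply, h2z, Pi.smul_apply, smul_eq_mul]
    filter_upwards [stepA, stepB, stepC, stepD] with z hAz hBz hCz hDz
    rw [← hCz, ← hBz, ← hAz, hDz]
  have hqq : ∀ t : ℝ, |t| < t1 → ∀ a, (fun z : Obs X => μt t a z.2.1)
      =ᵐ[P0] fun z => (hh a z + t * kk a z) / (rr a z + t * ss a z) := by
    intro t ht a
    filter_upwards [hq t ht a, hden t (le_of_lt ht) a] with z hqz hdz
    have hne : rr a z + t * ss a z ≠ 0 := ne_of_gt (lt_of_lt_of_le (by positivity) hdz)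
    rw [eq_div_iff hne]
    exact hqz
  -- the explicit parametric family and its derivative
  obtain ⟨qf, hqf_def⟩ : ∃ x : Bool → ℝ → Obs X → ℝ,
    x = fun a t z => (hh a z + t * kk a z) / (rr a z + t * ss a z) := ⟨_, rfl⟩
  obtain ⟨Φ, hΦ_def⟩ : ∃ x : ℝ → Obs X → ℝ,
    x = fun t z => (qf true t z - qf false t z) * (1 + t * uu z) := ⟨_, rfl⟩
  obtain ⟨num, hnum_def⟩ : ∃ x : Bool → Obs X → ℝ,
    x = fun a z => kk a z * rr a z - hh a z * ss a z := ⟨_, rfl⟩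
  obtain ⟨Φ', hΦ'_def⟩ : ∃ x : ℝ → Obs X → ℝ,
    x = fun t z =>
      (num true z / (rr true z + t * ss true z)^2
        - num false z / (rr false z + t * ss false z)^2) * (1 + t * uu z)
      + (qf true t z - qf false t z) * uu z := ⟨_, rfl⟩
  set C2 : ℝ := (CY + CY * M) / (eps/2) with hC2_def
  set C1 : ℝ := (2 * (CY * M)) / ((eps/2)^2) with hC1_def
  set K : ℝ := 2 * C1 * (1 + M) + 2 * C2 * M with hK_def
  have hC2_nonneg : 0 ≤ C2 := by
    rw [hC2_def]; positivity
  have hC1_nonneg : 0 ≤ C1 := by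
    rw [hC1_def]; positivity
  -- bundled good set
  have hGood : ∀ᵐ z ∂P0, (∀ a, |hh a z| ≤ CY) ∧ (∀ a, |kk a z| ≤ CY * M)
      ∧ (∀ a, |ss a z| ≤ M) ∧ (∀ a, eps ≤ rr a z ∧ rr a z ≤ 1 - eps) ∧ |uu z| ≤ M := by
    filter_upwards [habs_h true, habs_h false, habs_k true, habs_k false, habs_s true,
      habs_s false, hrr_rng true, hrr_rng false, habs_u] with z a1 a2 a3 a4 a5 a6 a7 a8 a9
    refine ⟨?_, ?_, ?_, ?_, a9⟩ <;> intro a <;> cases a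
    exacts [a2, a1, a4, a3, a6, a5, a8, a7]
  -- pointwise estimates on the good set
  have hptden : ∀ z : Obs X, (∀ a, |ss a z| ≤ M) → (∀ a, eps ≤ rr a z ∧ rr a z ≤ 1 - eps) →
      ∀ t : ℝ, |t| ≤ t1 → ∀ a, eps/2 ≤ rr a z + t * ss a z := by
    intro z hs hr t ht a
    have h3 : |t * ss a z| ≤ t1 * M := by
      rw [abs_mul]; exact mul_le_mul ht (hs a) (abs_nonneg _) (le_of_lt ht1pos)
    have h4 := abs_le.1 h3
    linarith [(hr a).1, ht1M]
  have hptqf : ∀ z : Obs X, (∀ a, |hh a z| ≤ CY) → (∀ a, |kk a z| ≤ CY * M) →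
      (∀ a, |ss a z| ≤ M) → (∀ a, eps ≤ rr a z ∧ rr a z ≤ 1 - eps) →
      ∀ t : ℝ, |t| ≤ t1 → ∀ a, |qf a t z| ≤ C2 := by
    intro z hhb hkb hsb hrb t ht a
    have hd := hptden z hsb hrb t ht a
    have hd0 : 0 < rr a z + t * ss a z := lt_of_lt_of_le (by positivity) hd
    simp only [hqf_def]
    rw [abs_div, hC2_def]
    refine div_le_div₀ (by positivity) ?_ (by positivity) ?_
    · calc |hh a z + t * kk a z| ≤ |hh a z| + |t * kk a z| := abs_add_le _ _
        _ ≤ CY + 1 * (CY * M) := by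
            refine add_le_add (hhb a) ?_
            rw [abs_mul]
            exact mul_le_mul (le_trans ht ht1le) (hkb a) (abs_nonneg _) zero_le_one
        _ = CY + CY * M := by ring
    · rw [abs_of_pos hd0]; exact hd
  have hptnum : ∀ z : Obs X, (∀ a, |hh a z| ≤ CY) → (∀ a, |kk a z| ≤ CY * M) →
      (∀ a, |ss a z| ≤ M) → (∀ a, eps ≤ rr a z ∧ rr a z ≤ 1 - eps) →
      ∀ a, |num a z| ≤ 2 * (CY * M) := by
    intro z hhb hkb hsb hrb a
    simp only [hnum_def]
    calc |kk a z * rr a z - hh a z * ss a z|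
        ≤ |kk a z * rr a z| + |hh a z * ss a z| := abs_sub _ _
      _ ≤ CY * M * 1 + CY * M := by
          refine add_le_add ?_ ?_
          · rw [abs_mul]
            refine mul_le_mul (hkb a) ?_ (abs_nonneg _) (by positivity)
            rw [abs_le]; constructor <;> [linarith [(hrb a).1, heps]; linarith [(hrb a).2, heps]]
          · rw [abs_mul]
            exact mul_le_mul (hhb a) (hsb a) (abs_nonneg _) hCY0
      _ = 2 * (CY * M) := by ring
  have hptq' : ∀ z : Obs X, (∀ a, |hh a z| ≤ CY) → (∀ a, |kk a z| ≤ CY * M) →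
      (∀ a, |ss a z| ≤ M) → (∀ a, eps ≤ rr a z ∧ rr a z ≤ 1 - eps) →
      ∀ t : ℝ, |t| ≤ t1 → ∀ a, |num a z / (rr a z + t * ss a z)^2| ≤ C1 := by
    intro z hhb hkb hsb hrb t ht a
    have hd := hptden z hsb hrb t ht a
    have hd0 : 0 < rr a z + t * ss a z := lt_of_lt_of_le (by positivity) hd
    rw [abs_div, hC1_def]
    refine div_le_div₀ (by positivity) (hptnum z hhb hkb hsb hrb a) (by positivity) ?_
    calc (eps/2)^2 ≤ (rr a z + t * ss a z)^2 := by nlinarith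
      _ = |(rr a z + t * ss a z)^2| := (abs_of_pos (by positivity)).symm
  have hptΦ' : ∀ z : Obs X, (∀ a, |hh a z| ≤ CY) → (∀ a, |kk a z| ≤ CY * M) →
      (∀ a, |ss a z| ≤ M) → (∀ a, eps ≤ rr a z ∧ rr a z ≤ 1 - eps) → |uu z| ≤ M →
      ∀ t : ℝ, |t| ≤ t1 → |Φ' t z| ≤ K := by
    intro z hhb hkb hsb hrb hub t ht
    have hq1 := hptq' z hhb hkb hsb hrb t ht true
    have hq0 := hptq' z hhb hkb hsb hrb t ht false
    have hf1 := hptqf z hhb hkb hsb hrb t ht true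
    have hf0 := hptqf z hhb hkb hsb hrb t ht false
    have htu : |1 + t * uu z| ≤ 1 + M := by
      calc |1 + t * uu z| ≤ |(1:ℝ)| + |t * uu z| := abs_add_le _ _
        _ ≤ 1 + 1 * M := by
            refine add_le_add (le_of_eq abs_one) ?_
            rw [abs_mul]
            exact mul_le_mul (le_trans ht ht1le) hub (abs_nonneg _) zero_le_one
        _ = 1 + M := by ring
    simp only [hΦ'_def]
    calc |(num true z / (rr true z + t * ss true z)^2
          - num false z / (rr false z + t * ss false z)^2) * (1 + t * uu z)
        + (qf true t z - qf false t z) * uu z|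
        ≤ |(num true z / (rr true z + t * ss true z)^2
          - num false z / (rr false z + t * ss false z)^2) * (1 + t * uu z)|
          + |(qf true t z - qf false t z) * uu z| := abs_add_le _ _
      _ ≤ (C1 + C1) * (1 + M) + (C2 + C2) * M := by
          refine add_le_add ?_ ?_
          · rw [abs_mul]
            refine mul_le_mul ?_ htu (abs_nonneg _) (by positivity)
            calc |num true z / (rr true z + t * ss true z)^2
                - num false z / (rr false z + t * ss false z)^2|
                ≤ |num true z / (rr true z + t * ss true z)^2|
                  + |num false z / (rr false z + t * ss false z)^2| := abs_sub _ _
              _ ≤ C1 + C1 := add_le_add hq1 hq0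
          · rw [abs_mul]
            refine mul_le_mul ?_ hub (abs_nonneg _) (by positivity)
            calc |qf true t z - qf false t z| ≤ |qf true t z| + |qf false t z| := abs_sub _ _
              _ ≤ C2 + C2 := add_le_add hf1 hf0
      _ = K := by rw [hK_def]; ring
  have hptΦ : ∀ z : Obs X, (∀ a, |hh a z| ≤ CY) → (∀ a, |kk a z| ≤ CY * M) →
      (∀ a, |ss a z| ≤ M) → (∀ a, eps ≤ rr a z ∧ rr a z ≤ 1 - eps) → |uu z| ≤ M →
      ∀ t : ℝ, |t| ≤ t1 → |Φ t z| ≤ (C2 + C2) * (1 + M) := by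
    intro z hhb hkb hsb hrb hub t ht
    have hf1 := hptqf z hhb hkb hsb hrb t ht true
    have hf0 := hptqf z hhb hkb hsb hrb t ht false
    have htu : |1 + t * uu z| ≤ 1 + M := by
      calc |1 + t * uu z| ≤ |(1:ℝ)| + |t * uu z| := abs_add_le _ _
        _ ≤ 1 + 1 * M := by
            refine add_le_add (le_of_eq abs_one) ?_
            rw [abs_mul]
            exact mul_le_mul (le_trans ht ht1le) hub (abs_nonneg _) zero_le_one
        _ = 1 + M := by ring
    simp only [hΦ_def]
    rw [abs_mul]
    refine mul_le_mul ?_ htu (abs_nonneg _) (by positivity)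
    calc |qf true t z - qf false t z| ≤ |qf true t z| + |qf false t z| := abs_sub _ _
      _ ≤ C2 + C2 := add_le_add hf1 hf0
  -- measurability
  have hMqf : ∀ a (t : ℝ), Measurable (fun z => qf a t z) := by
    intro a t
    rw [hqf_def]
    exact ((hMh a).add ((hMk a).const_mul t)).div ((hMr a).add ((hMs a).const_mul t))
  have hSMqf : ∀ a (t : ℝ), StronglyMeasurable[mS X] (fun z => qf a t z) := by
    intro a t
    rw [hqf_def]
    exact Measurable.stronglyMeasurable
      (((hSMh a).measurable.add (((hSMk a).measurable).const_mul t)).div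
        ((hSMr a).measurable.add (((hSMs a).measurable).const_mul t)))
  have hMΦ : ∀ t : ℝ, Measurable (Φ t) := by
    intro t
    rw [hΦ_def]
    exact ((hMqf true t).sub (hMqf false t)).mul (measurable_const.add (hMu.const_mul t))
  have hMΦ' : ∀ t : ℝ, Measurable (Φ' t) := by
    intro t
    rw [hΦ'_def, hnum_def]
    refine Measurable.add (Measurable.mul (Measurable.sub ?_ ?_)
      (measurable_const.add (hMu.const_mul t)))
      (((hMqf true t).sub (hMqf false t)).mul hMu)
    · exact (((hMk true).mul (hMr true)).sub ((hMh true).mul (hMs true))).div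
        (((hMr true).add ((hMs true).const_mul t)).pow measurable_const)
    · exact (((hMk false).mul (hMr false)).sub ((hMh false).mul (hMs false))).div
        (((hMr false).add ((hMs false).const_mul t)).pow measurable_const)
  -- F agrees with ∫ Φ on (-t1, t1)
  have hFG : ∀ t : ℝ, |t| < t1 →
      ∫ z, (μt t true z.2.1 - μt t false z.2.1) ∂(Pt t) = ∫ z, Φ t z ∂P0 := by
    intro t ht
    rw [key_int0 t _]
    have e1 : (fun z => max (1 + t * g z) 0 * (μt t true z.2.1 - μt t false z.2.1))
        =ᵐ[P0] fun z => (qf true t z - qf false t z) * (1 + t * g z) := by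
      filter_upwards [hqq t ht true, hqq t ht false, hw_ae t ht] with z h1 h0 hw
      rw [hw.2, h1, h0]
      simp only [hqf_def]
      ring
    rw [integral_congr_ae e1]
    have hqd_bd : ∀ᵐ z ∂P0, |qf true t z - qf false t z| ≤ C2 + C2 := by
      filter_upwards [hGood] with z hz
      calc |qf true t z - qf false t z| ≤ |qf true t z| + |qf false t z| := abs_sub _ _
        _ ≤ C2 + C2 := add_le_add
            (hptqf z hz.1 hz.2.1 hz.2.2.1 hz.2.2.2.1 t (le_of_lt ht) true)
            (hptqf z hz.1 hz.2.1 hz.2.2.1 hz.2.2.2.1 t (le_of_lt ht) false)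
    have Ia : Integrable (fun z => qf true t z - qf false t z) P0 :=
      integrable_of_ae_bound ((hMqf true t).sub (hMqf false t)).aestronglyMeasurable hqd_bd
    have Ib : Integrable (fun z => (qf true t z - qf false t z) * g z) P0 := by
      refine integrable_of_ae_bound (C := (C2 + C2) * M)
        (((hMqf true t).sub (hMqf false t)).mul hg_meas).aestronglyMeasurable ?_
      filter_upwards [hqd_bd, hg_bdd] with z h1 h2
      rw [abs_mul]
      exact mul_le_mul h1 h2 (abs_nonneg _) (by positivity)
    have Ic : Integrable (fun z => (qf true t z - qf false t z) * uu z) P0 := by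
      refine integrable_of_ae_bound (C := (C2 + C2) * M)
        (((hMqf true t).sub (hMqf false t)).mul hMu).aestronglyMeasurable ?_
      filter_upwards [hqd_bd, habs_u] with z h1 h2
      rw [abs_mul]
      exact mul_le_mul h1 h2 (abs_nonneg _) (by positivity)
    have e2 : ∫ z, (qf true t z - qf false t z) * g z ∂P0
        = ∫ z, (qf true t z - qf false t z) * uu z ∂P0 := by
      rw [huu_def]
      exact integral_mul_condexp hm ((hSMqf true t).sub (hSMqf false t)) hint_g Ib
    calc ∫ z, (qf true t z - qf false t z) * (1 + t * g z) ∂P0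
        = ∫ z, ((qf true t z - qf false t z) + t * ((qf true t z - qf false t z) * g z)) ∂P0 := by
          apply integral_congr_ae
          refine Eventually.of_forall fun z => ?_
          ring
      _ = ∫ z, (qf true t z - qf false t z) ∂P0
          + t * ∫ z, (qf true t z - qf false t z) * g z ∂P0 := by
          rw [integral_add Ia (Ib.const_mul t), integral_const_mul t _]
      _ = ∫ z, (qf true t z - qf false t z) ∂P0
          + t * ∫ z, (qf true t z - qf false t z) * uu z ∂P0 := by rw [e2]
      _ = ∫ z, Φ t z ∂P0 := by
          rw [← integral_const_mul t _, ← integral_add Ia (Ic.const_mul t)]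
          apply integral_congr_ae
          refine Eventually.of_forall fun z => ?_
          simp only [hΦ_def]
          ring
  -- differentiability under the integral sign
  have hballabs : ∀ t : ℝ, t ∈ Metric.ball (0:ℝ) t1 → |t| ≤ t1 := by
    intro t htb
    rw [Metric.mem_ball, Real.dist_eq, sub_zero] at htb
    exact le_of_lt htb
  have hdiff : ∀ᵐ z ∂P0, ∀ t ∈ Metric.ball (0:ℝ) t1,
      HasDerivAt (fun t' => Φ t' z) (Φ' t z) t := by
    filter_upwards [hGood] with z hz t htb
    have ht : |t| ≤ t1 := hballabs t htb
    have hda : ∀ a, HasDerivAt (fun t' : ℝ => qf a t' z)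
        (num a z / (rr a z + t * ss a z)^2) t := by
      intro a
      have h1 : HasDerivAt (fun t' : ℝ => hh a z + t' * kk a z) (kk a z) t :=
        (hasDerivAt_mul_const (kk a z)).const_add (hh a z)
      have h2 : HasDerivAt (fun t' : ℝ => rr a z + t' * ss a z) (ss a z) t :=
        (hasDerivAt_mul_const (ss a z)).const_add (rr a z)
      have hdnz : rr a z + t * ss a z ≠ 0 :=
        ne_of_gt (lt_of_lt_of_le (by positivity) (hptden z hz.2.2.1 hz.2.2.2.1 t ht a))
      have h3 := h1.div h2 hdnz
      have e : num a z / (rr a z + t * ss a z)^2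
          = (kk a z * (rr a z + t * ss a z) - (hh a z + t * kk a z) * ss a z)
            / (rr a z + t * ss a z)^2 := by
        simp only [hnum_def]
        ring
      have eq : (fun t' : ℝ => qf a t' z)
          = fun t' => (hh a z + t' * kk a z) / (rr a z + t' * ss a z) := by
        funext t'
        simp only [hqf_def]
      rw [eq, e]
      exact h3
    have hdu : HasDerivAt (fun t' : ℝ => 1 + t' * uu z) (uu z) t :=
      (hasDerivAt_mul_const (uu z)).const_add 1
    have h4 := ((hda true).sub (hda false)).mul hdu
    have eΦ : (fun t' => Φ t' z)
        = fun t' => (qf true t' z - qf false t' z) * (1 + t' * uu z) := by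
      funext t'
      simp only [hΦ_def]
    have eΦ' : Φ' t z = (num true z / (rr true z + t * ss true z)^2
        - num false z / (rr false z + t * ss false z)^2) * (1 + t * uu z)
        + (qf true t z - qf false t z) * uu z := by
      simp only [hΦ'_def]
    rw [eΦ, eΦ']
    exact h4
  have hboundΦ' : ∀ᵐ z ∂P0, ∀ t ∈ Metric.ball (0:ℝ) t1, ‖Φ' t z‖ ≤ K := by
    filter_upwards [hGood] with z hz t htb
    rw [Real.norm_eq_abs]
    exact hptΦ' z hz.1 hz.2.1 hz.2.2.1 hz.2.2.2.1 hz.2.2.2.2 t (hballabs t htb)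
  have hIΦ0 : Integrable (Φ 0) P0 := by
    refine integrable_of_ae_bound (C := (C2 + C2) * (1 + M)) (hMΦ 0).aestronglyMeasurable ?_
    filter_upwards [hGood] with z hz
    exact hptΦ z hz.1 hz.2.1 hz.2.2.1 hz.2.2.2.1 hz.2.2.2.2 0
      (by rw [abs_zero]; exact le_of_lt ht1pos)
  have hDerPair := hasDerivAt_integral_of_dominated_loc_of_deriv_le (Metric.ball_mem_nhds 0 ht1pos)
    (Eventually.of_forall fun t => (hMΦ t).aestronglyMeasurable) hIΦ0
    (hMΦ' 0).aestronglyMeasurable hboundΦ' (integrable_const K) hdiff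
  have hDer : HasDerivAt (fun t => ∫ z, Φ t z ∂P0) (∫ z, Φ' 0 z ∂P0) 0 := hDerPair.2
  have hIΦ'0 : Integrable (Φ' 0) P0 := hDerPair.1
  -- value of the derivative: ∫ Φ' 0 = ∫ φ g
  have hite : ∀ z : Obs X, (if z.2.2 then (1:ℝ) else 0) = ind true z := by
    intro z
    simp [hind_def]
  have hsplit : ∀ z : Obs X, φ z * g z
      = (1/pi z.2.1) * (ind true z * z.1 * g z)
      - (μ true z.2.1 / pi z.2.1) * (ind true z * g z)
      - (1/(1 - pi z.2.1)) * (ind false z * z.1 * g z)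
      + (μ false z.2.1 / (1 - pi z.2.1)) * (ind false z * g z)
      + (μ true z.2.1 - μ false z.2.1 - β0) * g z := by
    intro z
    rw [hφ]
    rcases Bool.eq_false_or_eq_true z.2.2 with hb | hb <;>
      simp only [aipw, hind_def, hb, if_true, if_false, Bool.false_eq_true, Bool.true_eq_false,
        ite_false, ite_true] <;> ring
  -- bounds for the propensity reciprocal
  have hpinv : ∀ᵐ z ∂P0, |1/pi z.2.1| ≤ 1/eps ∧ |1/(1 - pi z.2.1)| ≤ 1/eps
      ∧ 0 < pi z.2.1 ∧ 0 < 1 - pi z.2.1 := by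
    filter_upwards [hpi_range] with z hz
    have h1 : 0 < pi z.2.1 := lt_of_lt_of_le heps hz.1
    have h2 : 0 < 1 - pi z.2.1 := by linarith [hz.2, heps]
    refine ⟨?_, ?_, h1, h2⟩
    · rw [abs_of_pos (by positivity)]
      rw [div_le_div_iff₀ h1 heps]
      nlinarith [hz.1]
    · rw [abs_of_pos (by positivity)]
      rw [div_le_div_iff₀ h2 heps]
      nlinarith [hz.2]
  -- integrability of the five terms
  have hIT1 : Integrable (fun z : Obs X => (1/pi z.2.1) * (ind true z * z.1 * g z)) P0 := by
    refine integrable_of_ae_bound (C := (1/eps) * (CY * M))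
      ((measurable_const.div (hpi.1.comp hX2)).mul
        (((hind_meas true).mul measurable_fst).mul hg_meas)).aestronglyMeasurable ?_
    filter_upwards [hpinv, hY, hg_bdd] with z h1 h2 h3
    rw [abs_mul]
    refine mul_le_mul h1.1 ?_ (abs_nonneg _) (by positivity)
    rw [abs_mul, abs_mul]
    calc |ind true z| * |z.1| * |g z| ≤ 1 * CY * M := by
          refine mul_le_mul ?_ h3 (abs_nonneg _) (by positivity)
          exact mul_le_mul (hind_le true z) h2 (abs_nonneg _) zero_le_one
      _ = CY * M := by ring
  have hIT2 : Integrable (fun z : Obs X => (μ true z.2.1 / pi z.2.1) * (ind true z * g z)) P0 := by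
    refine integrable_of_ae_bound (C := (CY/eps) * (1/eps) * M)
      ((((hμ true).1.comp hX2).div (hpi.1.comp hX2)).mul
        ((hind_meas true).mul hg_meas)).aestronglyMeasurable ?_
    filter_upwards [hpinv, hμ_bd true, hg_bdd] with z h1 h2 h3
    rw [div_eq_mul_inv, abs_mul, abs_mul]
    have e4 : |(pi z.2.1)⁻¹| ≤ 1/eps := by
      rw [← one_div] at *
      simpa using h1.1
    calc |μ true z.2.1| * |(pi z.2.1)⁻¹| * |ind true z * g z|
        ≤ (CY/eps) * (1/eps) * (1 * M) := by
          refine mul_le_mul (mul_le_mul h2 e4 (abs_nonneg _) (by positivity)) ?_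
            (abs_nonneg _) (by positivity)
          rw [abs_mul]
          exact mul_le_mul (hind_le true z) h3 (abs_nonneg _) zero_le_one
      _ = (CY/eps) * (1/eps) * M := by ring
  have hIT3 : Integrable (fun z : Obs X => (1/(1 - pi z.2.1)) * (ind false z * z.1 * g z)) P0 := by
    refine integrable_of_ae_bound (C := (1/eps) * (CY * M))
      ((measurable_const.div (measurable_const.sub (hpi.1.comp hX2))).mul
        (((hind_meas false).mul measurable_fst).mul hg_meas)).aestronglyMeasurable ?_
    filter_upwards [hpinv, hY, hg_bdd] with z h1 h2 h3
    rw [abs_mul]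
    refine mul_le_mul h1.2.1 ?_ (abs_nonneg _) (by positivity)
    rw [abs_mul, abs_mul]
    calc |ind false z| * |z.1| * |g z| ≤ 1 * CY * M := by
          refine mul_le_mul ?_ h3 (abs_nonneg _) (by positivity)
          exact mul_le_mul (hind_le false z) h2 (abs_nonneg _) zero_le_one
      _ = CY * M := by ring
  have hIT4 : Integrable (fun z : Obs X => (μ false z.2.1 / (1 - pi z.2.1)) * (ind false z * g z)) P0 := by
    refine integrable_of_ae_bound (C := (CY/eps) * (1/eps) * M)
      ((((hμ false).1.comp hX2).div (measurable_const.sub (hpi.1.comp hX2))).mul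
        ((hind_meas false).mul hg_meas)).aestronglyMeasurable ?_
    filter_upwards [hpinv, hμ_bd false, hg_bdd] with z h1 h2 h3
    rw [div_eq_mul_inv, abs_mul, abs_mul]
    have e4 : |(1 - pi z.2.1)⁻¹| ≤ 1/eps := by
      rw [← one_div] at *
      simpa using h1.2.1
    calc |μ false z.2.1| * |(1 - pi z.2.1)⁻¹| * |ind false z * g z|
        ≤ (CY/eps) * (1/eps) * (1 * M) := by
          refine mul_le_mul (mul_le_mul h2 e4 (abs_nonneg _) (by positivity)) ?_
            (abs_nonneg _) (by positivity)
          rw [abs_mul]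
          exact mul_le_mul (hind_le false z) h3 (abs_nonneg _) zero_le_one
      _ = (CY/eps) * (1/eps) * M := by ring
  have hIT5 : Integrable (fun z : Obs X => (μ true z.2.1 - μ false z.2.1 - β0) * g z) P0 := by
    refine integrable_of_ae_bound (C := (CY/eps + CY/eps + |β0|) * M)
      (((((hμ true).1.comp hX2).sub ((hμ false).1.comp hX2)).sub measurable_const).mul
        hg_meas).aestronglyMeasurable ?_
    filter_upwards [hμ_bd true, hμ_bd false, hg_bdd] with z h1 h2 h3
    rw [abs_mul]
    refine mul_le_mul ?_ h3 (abs_nonneg _) (by positivity)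
    calc |μ true z.2.1 - μ false z.2.1 - β0|
        ≤ |μ true z.2.1 - μ false z.2.1| + |β0| := abs_sub _ _
      _ ≤ (|μ true z.2.1| + |μ false z.2.1|) + |β0| := by
          have := abs_sub (μ true z.2.1) (μ false z.2.1)
          linarith
      _ ≤ (CY/eps + CY/eps) + |β0| := by linarith
      _ = CY/eps + CY/eps + |β0| := by ring
  -- strong measurability (w.r.t. mS X) of the multiplier functions
  have hSM1 : StronglyMeasurable[mS X] (fun z : Obs X => 1/pi z.2.1) :=
    (measurable_const.div (hpi.1.comp hX2m)).stronglyMeasurable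
  have hSM2 : StronglyMeasurable[mS X] (fun z : Obs X => μ true z.2.1 / pi z.2.1) :=
    (((hμ true).1.comp hX2m).div (hpi.1.comp hX2m)).stronglyMeasurable
  have hSM3 : StronglyMeasurable[mS X] (fun z : Obs X => 1/(1 - pi z.2.1)) :=
    (measurable_const.div (measurable_const.sub (hpi.1.comp hX2m))).stronglyMeasurable
  have hSM4 : StronglyMeasurable[mS X] (fun z : Obs X => μ false z.2.1 / (1 - pi z.2.1)) :=
    (((hμ false).1.comp hX2m).div
      (measurable_const.sub (hpi.1.comp hX2m))).stronglyMeasurable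
  have hSM5 : StronglyMeasurable[mS X] (fun z : Obs X => μ true z.2.1 - μ false z.2.1 - β0) :=
    ((((hμ true).1.comp hX2m).sub ((hμ false).1.comp hX2m)).sub
      measurable_const).stronglyMeasurable
  -- condexp reduction of each term
  have eT1 : ∫ z, (1/pi z.2.1) * (ind true z * z.1 * g z) ∂P0
      = ∫ z, (1/pi z.2.1) * kk true z ∂P0 := by
    rw [hkk_def]
    exact integral_mul_condexp hm hSM1 (hint_k true) hIT1
  have eT2 : ∫ z, (μ true z.2.1 / pi z.2.1) * (ind true z * g z) ∂P0
      = ∫ z, (μ true z.2.1 / pi z.2.1) * ss true z ∂P0 := by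
    rw [hss_def]
    exact integral_mul_condexp hm hSM2 (hint_s true) hIT2
  have eT3 : ∫ z, (1/(1 - pi z.2.1)) * (ind false z * z.1 * g z) ∂P0
      = ∫ z, (1/(1 - pi z.2.1)) * kk false z ∂P0 := by
    rw [hkk_def]
    exact integral_mul_condexp hm hSM3 (hint_k false) hIT3
  have eT4 : ∫ z, (μ false z.2.1 / (1 - pi z.2.1)) * (ind false z * g z) ∂P0
      = ∫ z, (μ false z.2.1 / (1 - pi z.2.1)) * ss false z ∂P0 := by
    rw [hss_def]
    exact integral_mul_condexp hm hSM4 (hint_s false) hIT4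
  have eT5 : ∫ z, (μ true z.2.1 - μ false z.2.1 - β0) * g z ∂P0
      = ∫ z, (μ true z.2.1 - μ false z.2.1 - β0) * uu z ∂P0 := by
    rw [huu_def]
    exact integral_mul_condexp hm hSM5 hint_g hIT5
  -- integrability of the reduced terms
  have hJ1 : Integrable (fun z : Obs X => (1/pi z.2.1) * kk true z) P0 := by
    refine integrable_of_ae_bound (C := (1/eps) * (CY * M))
      ((measurable_const.div (hpi.1.comp hX2)).mul (hMk true)).aestronglyMeasurable ?_
    filter_upwards [hpinv, habs_k true] with z h1 h2
    rw [abs_mul]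
    exact mul_le_mul h1.1 h2 (abs_nonneg _) (by positivity)
  have hJ2 : Integrable (fun z : Obs X => (μ true z.2.1 / pi z.2.1) * ss true z) P0 := by
    refine integrable_of_ae_bound (C := (CY/eps) * (1/eps) * M)
      ((((hμ true).1.comp hX2).div (hpi.1.comp hX2)).mul (hMs true)).aestronglyMeasurable ?_
    filter_upwards [hpinv, hμ_bd true, habs_s true] with z h1 h2 h3
    rw [abs_mul, div_eq_mul_inv, abs_mul]
    have e4 : |(pi z.2.1)⁻¹| ≤ 1/eps := by
      rw [← one_div] at *
      simpa using h1.1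
    exact mul_le_mul (mul_le_mul h2 e4 (abs_nonneg _) (by positivity)) h3 (abs_nonneg _)
      (by positivity)
  have hJ3 : Integrable (fun z : Obs X => (1/(1 - pi z.2.1)) * kk false z) P0 := by
    refine integrable_of_ae_bound (C := (1/eps) * (CY * M))
      ((measurable_const.div (measurable_const.sub (hpi.1.comp hX2))).mul
        (hMk false)).aestronglyMeasurable ?_
    filter_upwards [hpinv, habs_k false] with z h1 h2
    rw [abs_mul]
    exact mul_le_mul h1.2.1 h2 (abs_nonneg _) (by positivity)
  have hJ4 : Integrable (fun z : Obs X => (μ false z.2.1 / (1 - pi z.2.1)) * ss false z) P0 := by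
    refine integrable_of_ae_bound (C := (CY/eps) * (1/eps) * M)
      ((((hμ false).1.comp hX2).div (measurable_const.sub (hpi.1.comp hX2))).mul
        (hMs false)).aestronglyMeasurable ?_
    filter_upwards [hpinv, hμ_bd false, habs_s false] with z h1 h2 h3
    rw [abs_mul, div_eq_mul_inv, abs_mul]
    have e4 : |(1 - pi z.2.1)⁻¹| ≤ 1/eps := by
      rw [← one_div] at *
      simpa using h1.2.1
    exact mul_le_mul (mul_le_mul h2 e4 (abs_nonneg _) (by positivity)) h3 (abs_nonneg _)
      (by positivity)
  have hJ5 : Integrable (fun z : Obs X => (μ true z.2.1 - μ false z.2.1 - β0) * uu z) P0 := by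
    refine integrable_of_ae_bound (C := (CY/eps + CY/eps + |β0|) * M)
      (((((hμ true).1.comp hX2).sub ((hμ false).1.comp hX2)).sub measurable_const).mul
        hMu).aestronglyMeasurable ?_
    filter_upwards [hμ_bd true, hμ_bd false, habs_u] with z h1 h2 h3
    rw [abs_mul]
    refine mul_le_mul ?_ h3 (abs_nonneg _) (by positivity)
    calc |μ true z.2.1 - μ false z.2.1 - β0|
        ≤ |μ true z.2.1 - μ false z.2.1| + |β0| := abs_sub _ _
      _ ≤ (|μ true z.2.1| + |μ false z.2.1|) + |β0| := by
          have := abs_sub (μ true z.2.1) (μ false z.2.1)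
          linarith
      _ ≤ (CY/eps + CY/eps) + |β0| := by linarith
      _ = CY/eps + CY/eps + |β0| := by ring
  have hintuu : Integrable uu P0 := integrable_of_ae_bound hMu.aestronglyMeasurable habs_u
  have huu0 : ∫ z, uu z ∂P0 = 0 := by
    rw [huu_def, integral_condExp hm]
    exact hg_mean
  -- combine
  have hcomb : ∫ z, φ z * g z ∂P0
      = ∫ z, ((1/pi z.2.1) * kk true z - (μ true z.2.1 / pi z.2.1) * ss true z
          - (1/(1 - pi z.2.1)) * kk false z + (μ false z.2.1 / (1 - pi z.2.1)) * ss false z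
          + (μ true z.2.1 - μ false z.2.1 - β0) * uu z) ∂P0 := by
    rw [show (fun z : Obs X => φ z * g z)
        = fun z => (1/pi z.2.1) * (ind true z * z.1 * g z)
          - (μ true z.2.1 / pi z.2.1) * (ind true z * g z)
          - (1/(1 - pi z.2.1)) * (ind false z * z.1 * g z)
          + (μ false z.2.1 / (1 - pi z.2.1)) * (ind false z * g z)
          + (μ true z.2.1 - μ false z.2.1 - β0) * g z from funext hsplit]
    have hA2 : Integrable (fun z : Obs X => (1/pi z.2.1) * (ind true z * z.1 * g z)
        - (μ true z.2.1 / pi z.2.1) * (ind true z * g z)) P0 := hIT1.sub hIT2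
    have hA3 : Integrable (fun z : Obs X => (1/pi z.2.1) * (ind true z * z.1 * g z)
        - (μ true z.2.1 / pi z.2.1) * (ind true z * g z)
        - (1/(1 - pi z.2.1)) * (ind false z * z.1 * g z)) P0 := hA2.sub hIT3
    have hA4 : Integrable (fun z : Obs X => (1/pi z.2.1) * (ind true z * z.1 * g z)
        - (μ true z.2.1 / pi z.2.1) * (ind true z * g z)
        - (1/(1 - pi z.2.1)) * (ind false z * z.1 * g z)
        + (μ false z.2.1 / (1 - pi z.2.1)) * (ind false z * g z)) P0 := hA3.add hIT4
    have hB2 : Integrable (fun z : Obs X => (1/pi z.2.1) * kk true z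
        - (μ true z.2.1 / pi z.2.1) * ss true z) P0 := hJ1.sub hJ2
    have hB3 : Integrable (fun z : Obs X => (1/pi z.2.1) * kk true z
        - (μ true z.2.1 / pi z.2.1) * ss true z
        - (1/(1 - pi z.2.1)) * kk false z) P0 := hB2.sub hJ3
    have hB4 : Integrable (fun z : Obs X => (1/pi z.2.1) * kk true z
        - (μ true z.2.1 / pi z.2.1) * ss true z
        - (1/(1 - pi z.2.1)) * kk false z
        + (μ false z.2.1 / (1 - pi z.2.1)) * ss false z) P0 := hB3.add hJ4
    rw [integral_add hA4 hIT5, integral_add hA3 hIT4,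
      integral_sub hA2 hIT3, integral_sub hIT1 hIT2,
      eT1, eT2, eT3, eT4, eT5,
      ← integral_sub hJ1 hJ2, ← integral_sub hB2 hJ3,
      ← integral_add hB3 hJ4, ← integral_add hB4 hJ5]
  have hfinal : ∫ z, ((1/pi z.2.1) * kk true z - (μ true z.2.1 / pi z.2.1) * ss true z
      - (1/(1 - pi z.2.1)) * kk false z + (μ false z.2.1 / (1 - pi z.2.1)) * ss false z
      + (μ true z.2.1 - μ false z.2.1 - β0) * uu z) ∂P0 = ∫ z, Φ' 0 z ∂P0 := by
    have e6 : (fun z : Obs X => (1/pi z.2.1) * kk true z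
        - (μ true z.2.1 / pi z.2.1) * ss true z
        - (1/(1 - pi z.2.1)) * kk false z + (μ false z.2.1 / (1 - pi z.2.1)) * ss false z
        + (μ true z.2.1 - μ false z.2.1 - β0) * uu z)
        =ᵐ[P0] fun z => Φ' 0 z - β0 * uu z := by
      filter_upwards [hr1, hr0, hμrel true, hμrel false, hrr_rng true, hrr_rng false]
        with z h1 h0 hm1 hm0 hg1 hg0
      have hrt0 : rr true z ≠ 0 := ne_of_gt (lt_of_lt_of_le heps hg1.1)
      have hrf0 : rr false z ≠ 0 := ne_of_gt (lt_of_lt_of_le heps hg0.1)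
      have hqz : 1 - pi z.2.1 = rr false z := by rw [h0]
      have hpz : pi z.2.1 = rr true z := by rw [h1]
      have hμ1 : μ true z.2.1 = hh true z / rr true z := by
        rw [hm1]
        field_simp
      have hμ0 : μ false z.2.1 = hh false z / rr false z := by
        rw [hm0]
        field_simp
      rw [hqz, hpz, hμ1, hμ0]
      simp only [hΦ'_def, hqf_def, hnum_def]
      field_simp
      ring_nf
      field_simp
      ring
    rw [integral_congr_ae e6, integral_sub hIΦ'0 (hintuu.const_mul β0),
      integral_const_mul β0 _, huu0, mul_zero, sub_zero]
  have hval : ∫ z, Φ' 0 z ∂P0 = ∫ z, φ z * g z ∂P0 := by rw [hcomb, hfinal]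
  -- assemble
  have hnear : ∀ᶠ t in 𝓝 (0:ℝ), |t| < t1 := by
    simpa using eventually_abs_sub_lt (0:ℝ) ht1pos
  have hev : (fun t : ℝ => ∫ z, (μt t true z.2.1 - μt t false z.2.1) ∂(Pt t))
      =ᶠ[𝓝 0] fun t => ∫ z, Φ t z ∂P0 := hnear.mono fun t ht => hFG t ht
  have hres : HasDerivAt (fun t => ∫ z, Φ t z ∂P0) (∫ z, φ z * g z ∂P0) 0 := hval ▸ hDer
  exact hres.congr_of_eventuallyEq hev

end ATE
end
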